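/- arXiv:1604.01902 — 4 statements merged into one kernel-verified Lean document; each statement's English description precedes it below -/
import Mathlib

section
/- (i) For every integer l ≥ 0, the Cartan double coset satisfies GL₂(𝔬)·a(ϖ^l)·GL₂(𝔬) = 𝒪_L^×·a(ϖ^l)·GL₂(𝔬), and also equals J⁰·a(ϖ^l)·GL₂(𝔬) for J⁰ = 𝒪_L^×·K(𝔭^{m+1}) with any m ∈ ℕ. (ii) For every m ∈ ℕ, GL₂(F) is the disjoint union over l ∈ ℕ of the sets J·a(ϖ^l)·GL₂(𝔬), where J = L^×·K(𝔭^{m+1}). -/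
/-! `F` a nonarchimedean local field, modelled by a field `F` with valuation ring `o`
(a DVR) and uniformizer `ϖ ∈ o`; `a(y) = diag(y,1)`;
`K(𝔭^m) = {k ∈ GL₂(𝔬) : k ≡ 1 mod 𝔭^m}`.  We fix `𝐚₀ ∈ 𝔬^×`, `𝐚₁ ∈ 𝔬` with
`X² − 𝐚₁X − 𝐚₀` irreducible modulo `𝔭` and set `α = [[0,1],[𝐚₀,𝐚₁]]`, so that
`L = F[α] ⊆ M₂(F)` is an unramified quadratic field extension with ring of integers
`𝒪_L = 𝔬[α]`, unit group `𝒪_L^× ⊆ GL₂(𝔬)`, and `L^× ⊆ GL₂(F)`;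
`J⁰ = 𝒪_L^×·K(𝔭^{m+1})` and `J = L^×·K(𝔭^{m+1})`. -/

/-- `a(y) = diag(y, 1)`. -/
def aM {F : Type*} [Field F] (y : F) : Matrix (Fin 2) (Fin 2) F := !![y, 0; 0, 1]

/-- `GL₂(𝔬)`: matrices with entries in `𝔬` whose inverse also has entries in `𝔬`. -/
def GLo {F : Type*} [Field F] (o : ValuationSubring F) :
    Set (Matrix (Fin 2) (Fin 2) F) :=
  {g | (∀ i j, g i j ∈ o) ∧
    ∃ h : Matrix (Fin 2) (Fin 2) F, (∀ i j, h i j ∈ o) ∧ g * h = 1 ∧ h * g = 1}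

/-- The principal congruence subgroup `K(𝔭^m) = {k ∈ GL₂(𝔬) : k ≡ 1 mod 𝔭^m}`. -/
def Kpm {F : Type*} [Field F] (o : ValuationSubring F) (ϖ : F) (m : ℕ) :
    Set (Matrix (Fin 2) (Fin 2) F) :=
  {g | g ∈ GLo o ∧ ∀ i j, ∃ d ∈ o,
    g i j - (1 : Matrix (Fin 2) (Fin 2) F) i j = ϖ ^ m * d}

/-- The subalgebra `L = F[α] = F + Fα ⊆ M₂(F)` (a quadratic field extension). -/
def Lset {F : Type*} [Field F] (α : Matrix (Fin 2) (Fin 2) F) :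
    Set (Matrix (Fin 2) (Fin 2) F) :=
  {m | ∃ x y : F, m = x • (1 : Matrix (Fin 2) (Fin 2) F) + y • α}

/-- The group `L^×` of invertible elements of `L` (inside `GL₂(F)`). -/
def Lx {F : Type*} [Field F] (α : Matrix (Fin 2) (Fin 2) F) :
    Set (Matrix (Fin 2) (Fin 2) F) :=
  {m | m ∈ Lset α ∧ ∃ m' ∈ Lset α, m * m' = 1 ∧ m' * m = 1}

/-- The order `𝒪_L = 𝔬[α] = 𝔬 + 𝔬α ⊆ M₂(F)`. -/
def OL {F : Type*} [Field F] (o : ValuationSubring F) (α : Matrix (Fin 2) (Fin 2) F) :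
    Set (Matrix (Fin 2) (Fin 2) F) :=
  {m | ∃ x y : F, x ∈ o ∧ y ∈ o ∧ m = x • (1 : Matrix (Fin 2) (Fin 2) F) + y • α}

/-- The unit group `𝒪_L^×` (as a subset of `M₂(F)`). -/
def OLx {F : Type*} [Field F] (o : ValuationSubring F) (α : Matrix (Fin 2) (Fin 2) F) :
    Set (Matrix (Fin 2) (Fin 2) F) :=
  {m | m ∈ OL o α ∧ ∃ m' ∈ OL o α, m * m' = 1 ∧ m' * m = 1}

lemma aux_not_both {F : Type*} [Field F] {o : ValuationSubring F}
    {ϖ : F} (hϖo : ϖ ∈ o) (hϖ : Irreducible (⟨ϖ, hϖo⟩ : o))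
    {z c d : F} (hc : c ∈ o) (hd : d ∈ o) (h1 : z * c = 1)
    (h2 : z = ϖ * d) : False := by
  have : (⟨ϖ, hϖo⟩ : o) * ⟨d * c, mul_mem hd hc⟩ = 1 := by
    ext; push_cast; rw [← mul_assoc, ← h2, h1]
  exact hϖ.not_isUnit (IsUnit.of_mul_eq_one _ this)

lemma aux_unit_or_pdvd {F : Type*} [Field F] {o : ValuationSubring F} [IsDiscreteValuationRing o]
    {ϖ : F} (hϖo : ϖ ∈ o) (hϖ : Irreducible (⟨ϖ, hϖo⟩ : o))
    {z : F} (hz : z ∈ o) :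
    (z ≠ 0 ∧ z⁻¹ ∈ o) ∨ (∃ d ∈ o, z = ϖ * d) := by
  by_cases hu : IsUnit (⟨z, hz⟩ : o)
  · left
    obtain ⟨c, hc⟩ := isUnit_iff_exists_inv.mp hu
    have h1 : z * (c : F) = 1 := by
      have := congrArg Subtype.val hc; push_cast at this; exact this
    have hz0 : z ≠ 0 := by intro h; rw [h, zero_mul] at h1; exact zero_ne_one h1
    refine ⟨hz0, ?_⟩
    rw [inv_eq_of_mul_eq_one_right h1]
    exact c.2
  · right
    have hm : (⟨z, hz⟩ : o) ∈ IsLocalRing.maximalIdeal o := by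
      rwa [IsLocalRing.mem_maximalIdeal, mem_nonunits_iff]
    rw [Irreducible.maximalIdeal_eq hϖ, Ideal.mem_span_singleton] at hm
    obtain ⟨d, hd⟩ := hm
    refine ⟨d, d.2, ?_⟩
    have := congrArg Subtype.val hd; push_cast at this; exact this

lemma aux_pne {F : Type*} [Field F] {o : ValuationSubring F}
    {ϖ : F} (hϖo : ϖ ∈ o) (hϖ : Irreducible (⟨ϖ, hϖo⟩ : o)) : ϖ ≠ 0 := by
  intro h
  exact hϖ.ne_zero (by ext; simp [h])

lemma aux_fact {F : Type*} [Field F] {o : ValuationSubring F} [IsDiscreteValuationRing o]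
    {ϖ : F} (hϖo : ϖ ∈ o) (hϖ : Irreducible (⟨ϖ, hϖo⟩ : o))
    {z : F} (hz : z ∈ o) (h0 : z ≠ 0) :
    ∃ (l : ℕ) (w : F), w ∈ o ∧ w ≠ 0 ∧ w⁻¹ ∈ o ∧ z = ϖ ^ l * w := by
  have hz0 : (⟨z, hz⟩ : o) ≠ 0 := fun h => h0 (by
    have := congrArg Subtype.val h; push_cast at this; exact this)
  obtain ⟨n, u, hu⟩ := IsDiscreteValuationRing.eq_unit_mul_pow_irreducible hz0 hϖ
  have h1 : ((u : o) : F) * (((u⁻¹ : oˣ) : o) : F) = 1 := by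
    have := congrArg Subtype.val u.mul_inv; push_cast at this; exact this
  refine ⟨n, ((u : o) : F), SetLike.coe_mem _, ?_, ?_, ?_⟩
  · intro h; rw [h, zero_mul] at h1; exact zero_ne_one h1
  · rw [inv_eq_of_mul_eq_one_right h1]; exact SetLike.coe_mem _
  · have h2 : z = ((u : o) : F) * ϖ ^ n := by
      have := congrArg Subtype.val hu; push_cast at this; exact this
    rw [h2]; ring
section GLoLemmas
variable {F : Type*} [Field F] {o : ValuationSubring F}

lemma entries_mul {A B : Matrix (Fin 2) (Fin 2) F}
    (hA : ∀ i j, A i j ∈ o) (hB : ∀ i j, B i j ∈ o) : ∀ i j, (A * B) i j ∈ o := by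
  intro i j
  rw [Matrix.mul_apply, Fin.sum_univ_two]
  exact add_mem (mul_mem (hA i 0) (hB 0 j)) (mul_mem (hA i 1) (hB 1 j))

lemma GLo_one : (1 : Matrix (Fin 2) (Fin 2) F) ∈ GLo o := by
  refine ⟨?_, 1, ?_, one_mul 1, one_mul 1⟩ <;>
  · intro i j
    fin_cases i <;> fin_cases j <;> simp [Matrix.one_fin_two] <;>
      first | exact o.zero_mem | exact o.one_mem

lemma GLo_mul {A B : Matrix (Fin 2) (Fin 2) F} (hA : A ∈ GLo o) (hB : B ∈ GLo o) :
    A * B ∈ GLo o := by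
  obtain ⟨hAe, A', hA'e, hA1, hA2⟩ := hA
  obtain ⟨hBe, B', hB'e, hB1, hB2⟩ := hB
  refine ⟨entries_mul hAe hBe, B' * A', entries_mul hB'e hA'e, ?_, ?_⟩
  · rw [mul_assoc, ← mul_assoc B, hB1, one_mul, hA1]
  · rw [mul_assoc, ← mul_assoc A', hA2, one_mul, hB2]

lemma GLo_inv {A A' : Matrix (Fin 2) (Fin 2) F} (hA : A ∈ GLo o)
    (h1 : A * A' = 1) (h2 : A' * A = 1) : A' ∈ GLo o := by
  obtain ⟨hAe, B, hBe, hB1, hB2⟩ := hA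
  have : A' = B := by
    calc A' = 1 * A' := (one_mul _).symm
    _ = B * A * A' := by rw [hB2]
    _ = B * (A * A') := by rw [mul_assoc]
    _ = B := by rw [h1, mul_one]
  exact this ▸ ⟨hBe, A, hAe, this ▸ h2, this ▸ h1⟩

lemma GLo_det_unit {A : Matrix (Fin 2) (Fin 2) F} (hA : A ∈ GLo o) :
    A.det ∈ o ∧ A.det ≠ 0 ∧ (A.det)⁻¹ ∈ o := by
  obtain ⟨hAe, B, hBe, hB1, hB2⟩ := hA
  have hdm : A.det ∈ o := by
    rw [Matrix.det_fin_two]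
    exact sub_mem (mul_mem (hAe 0 0) (hAe 1 1)) (mul_mem (hAe 0 1) (hAe 1 0))
  have h1 : A.det * B.det = 1 := by rw [← Matrix.det_mul, hB1, Matrix.det_one]
  have hd0 : A.det ≠ 0 := by
    intro h; rw [h, zero_mul] at h1; exact zero_ne_one h1
  refine ⟨hdm, hd0, ?_⟩
  rw [inv_eq_of_mul_eq_one_right h1]
  rw [Matrix.det_fin_two]
  exact sub_mem (mul_mem (hBe 0 0) (hBe 1 1)) (mul_mem (hBe 0 1) (hBe 1 0))

lemma mem_GLo_of_det {A : Matrix (Fin 2) (Fin 2) F} (hAe : ∀ i j, A i j ∈ o)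
    (h0 : A.det ≠ 0) (hi : (A.det)⁻¹ ∈ o) : A ∈ GLo o := by
  refine ⟨hAe, (A.det)⁻¹ • A.adjugate, ?_, ?_, ?_⟩
  · intro i j
    rw [Matrix.adjugate_fin_two]
    fin_cases i <;> fin_cases j <;> simp [Matrix.smul_apply] <;>
      first
        | exact mul_mem hi (hAe 1 1)
        | exact mul_mem hi (neg_mem (hAe 0 1))
        | exact mul_mem hi (neg_mem (hAe 1 0))
        | exact mul_mem hi (hAe 0 0)
        | exact mul_mem hi (hAe 0 1)
        | exact mul_mem hi (hAe 1 0)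
  · rw [Matrix.mul_smul, Matrix.mul_adjugate, smul_smul, inv_mul_cancel₀ h0, one_smul]
  · rw [Matrix.smul_mul, Matrix.adjugate_mul, smul_smul, inv_mul_cancel₀ h0, one_smul]

end GLoLemmas
section OLxLemmas
variable {F : Type*} [Field F]

lemma repr_eq (a0 a1 x y : F) :
    x • (1 : Matrix (Fin 2) (Fin 2) F) + y • !![0, 1; a0, a1] =
      !![x, y; a0 * y, x + a1 * y] := by
  rw [Matrix.one_fin_two]
  ext i j
  fin_cases i <;> fin_cases j <;> simp [mul_comm]

lemma repr_entries {o : ValuationSubring F} {a0 a1 x y : F} (ha0 : a0 ∈ o) (ha1 : a1 ∈ o)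
    (hx : x ∈ o) (hy : y ∈ o) : ∀ i j, (!![x, y; a0 * y, x + a1 * y] : Matrix (Fin 2) (Fin 2) F) i j ∈ o := by
  intro i j
  fin_cases i <;> fin_cases j <;> simp
  · exact hx
  · exact hy
  · exact mul_mem ha0 hy
  · exact add_mem hx (mul_mem ha1 hy)

lemma mul_inv_pair (a0 a1 X Y : F) (hN0 : X ^ 2 + a1 * X * Y - a0 * Y ^ 2 ≠ 0) :
    (!![X, Y; a0 * Y, X + a1 * Y] : Matrix (Fin 2) (Fin 2) F) *
        !![(X ^ 2 + a1 * X * Y - a0 * Y ^ 2)⁻¹ * (X + a1 * Y),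
            -((X ^ 2 + a1 * X * Y - a0 * Y ^ 2)⁻¹ * Y);
            -((X ^ 2 + a1 * X * Y - a0 * Y ^ 2)⁻¹ * (a0 * Y)),
            (X ^ 2 + a1 * X * Y - a0 * Y ^ 2)⁻¹ * X] = 1 ∧
      (!![(X ^ 2 + a1 * X * Y - a0 * Y ^ 2)⁻¹ * (X + a1 * Y),
            -((X ^ 2 + a1 * X * Y - a0 * Y ^ 2)⁻¹ * Y);
            -((X ^ 2 + a1 * X * Y - a0 * Y ^ 2)⁻¹ * (a0 * Y)),
            (X ^ 2 + a1 * X * Y - a0 * Y ^ 2)⁻¹ * X] : Matrix (Fin 2) (Fin 2) F) *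
        !![X, Y; a0 * Y, X + a1 * Y] = 1 := by
  constructor <;>
  · ext i j
    fin_cases i <;> fin_cases j <;>
      simp [Matrix.mul_apply, Fin.sum_univ_two, Matrix.one_fin_two] <;>
      field_simp <;> first | linear_combination mul_inv_cancel₀ hN0 | ring

lemma OLx_mem' {o : ValuationSubring F} {a0 a1 X Y : F} (ha0 : a0 ∈ o) (ha1 : a1 ∈ o)
    (hX : X ∈ o) (hY : Y ∈ o) (hN0 : X ^ 2 + a1 * X * Y - a0 * Y ^ 2 ≠ 0)
    (hNi : (X ^ 2 + a1 * X * Y - a0 * Y ^ 2)⁻¹ ∈ o) :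
    (!![X, Y; a0 * Y, X + a1 * Y] : Matrix (Fin 2) (Fin 2) F) ∈ OLx o !![0, 1; a0, a1] := by
  set N := X ^ 2 + a1 * X * Y - a0 * Y ^ 2 with hN
  have hrepr : (!![N⁻¹ * (X + a1 * Y), -(N⁻¹ * Y); -(N⁻¹ * (a0 * Y)), N⁻¹ * X] :
      Matrix (Fin 2) (Fin 2) F) =
      (N⁻¹ * (X + a1 * Y)) • (1 : Matrix (Fin 2) (Fin 2) F) + (-(N⁻¹ * Y)) • !![0, 1; a0, a1] := by
    rw [repr_eq]
    ext i j
    fin_cases i <;> fin_cases j <;> simp <;> ring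
  obtain ⟨h1, h2⟩ := mul_inv_pair a0 a1 X Y hN0
  refine ⟨⟨X, Y, hX, hY, (repr_eq a0 a1 X Y).symm⟩,
    _, ⟨N⁻¹ * (X + a1 * Y), -(N⁻¹ * Y), ?_, ?_, hrepr⟩, h1, h2⟩
  · exact mul_mem hNi (add_mem hX (mul_mem ha1 hY))
  · exact neg_mem (mul_mem hNi hY)

lemma OLx_sub_GLo {o : ValuationSubring F} {a0 a1 : F} (ha0 : a0 ∈ o) (ha1 : a1 ∈ o)
    {m : Matrix (Fin 2) (Fin 2) F} (hm : m ∈ OLx o !![0, 1; a0, a1]) : m ∈ GLo o := by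
  obtain ⟨⟨x, y, hx, hy, rfl⟩, m', ⟨p, q, hp, hq, rfl⟩, h1, h2⟩ := hm
  simp only [repr_eq] at h1 h2 ⊢
  exact ⟨repr_entries ha0 ha1 hx hy, _, repr_entries ha0 ha1 hp hq, h1, h2⟩

end OLxLemmas
section NunitSec
variable {F : Type*} [Field F] {o : ValuationSubring F} [IsDiscreteValuationRing o]

lemma Nunit {ϖ : F} (hϖo : ϖ ∈ o) (hϖ : Irreducible (⟨ϖ, hϖo⟩ : o))
    {a0 a1 : F} (ha0 : a0 ∈ o) (ha1 : a1 ∈ o)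
    (hirr : ∀ z : F, z ∈ o → ¬ ∃ d ∈ o, z ^ 2 - a1 * z - a0 = ϖ * d)
    {X Y : F} (hX : X ∈ o) (hY : Y ∈ o)
    (h : (Y ≠ 0 ∧ Y⁻¹ ∈ o) ∨ ((∃ c ∈ o, Y = ϖ * c) ∧ X ≠ 0 ∧ X⁻¹ ∈ o)) :
    (X ^ 2 + a1 * X * Y - a0 * Y ^ 2) ≠ 0 ∧ (X ^ 2 + a1 * X * Y - a0 * Y ^ 2)⁻¹ ∈ o := by
  have hNo : X ^ 2 + a1 * X * Y - a0 * Y ^ 2 ∈ o :=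
    sub_mem (add_mem (pow_mem hX 2) (mul_mem (mul_mem ha1 hX) hY)) (mul_mem ha0 (pow_mem hY 2))
  have hnd : ¬ ∃ d ∈ o, X ^ 2 + a1 * X * Y - a0 * Y ^ 2 = ϖ * d := by
    rintro ⟨d, hd, hEq⟩
    rcases h with ⟨hY0, hYi⟩ | ⟨⟨c, hc, hYc⟩, hX0, hXi⟩
    · apply hirr (-(X * Y⁻¹)) (neg_mem (mul_mem hX hYi))
      refine ⟨d * Y⁻¹ * Y⁻¹, mul_mem (mul_mem hd hYi) hYi, ?_⟩
      have hkey : (-(X * Y⁻¹)) ^ 2 - a1 * (-(X * Y⁻¹)) - a0 =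
          (X ^ 2 + a1 * X * Y - a0 * Y ^ 2) * Y⁻¹ * Y⁻¹ := by
        field_simp
        ring
      rw [hkey, hEq]
      ring
    · have h2 : X * X = ϖ * (d - a1 * X * c + a0 * c * Y) := by
        linear_combination hEq + (a0 * Y - a1 * X) * hYc
      exact aux_not_both hϖo hϖ (mul_mem hXi hXi)
        (add_mem (sub_mem hd (mul_mem (mul_mem ha1 hX) hc)) (mul_mem (mul_mem ha0 hc) hY))
        (by field_simp) h2
  have hN0 : X ^ 2 + a1 * X * Y - a0 * Y ^ 2 ≠ 0 := by
    intro h0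
    exact hnd ⟨0, zero_mem _, by rw [h0, mul_zero]⟩
  rcases aux_unit_or_pdvd hϖo hϖ hNo with ⟨_, hi⟩ | hdvd
  · exact ⟨hN0, hi⟩
  · exact absurd hdvd hnd

end NunitSec
section DecompSec
variable {F : Type*} [Field F] {o : ValuationSubring F} [IsDiscreteValuationRing o]

lemma decompK {ϖ : F} (hϖo : ϖ ∈ o) (hϖ : Irreducible (⟨ϖ, hϖo⟩ : o))
    {a0 a1 : F} (ha0 : a0 ∈ o) (ha1 : a1 ∈ o)
    (hirr : ∀ z : F, z ∈ o → ¬ ∃ d ∈ o, z ^ 2 - a1 * z - a0 = ϖ * d)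
    {g : Matrix (Fin 2) (Fin 2) F} (hg : g ∈ GLo o) :
    ∃ u ∈ OLx o !![0, 1; a0, a1], ∃ T ∈ GLo o, T 0 1 = 0 ∧ g = u * T := by
  obtain ⟨hge, -⟩ := id hg
  set Y : F := g 0 1 with hYdef
  set X : F := g 1 1 - a1 * g 0 1 with hXdef
  have hX : X ∈ o := sub_mem (hge 1 1) (mul_mem ha1 (hge 0 1))
  have hY : Y ∈ o := hge 0 1
  have hcase : (Y ≠ 0 ∧ Y⁻¹ ∈ o) ∨ ((∃ c ∈ o, Y = ϖ * c) ∧ X ≠ 0 ∧ X⁻¹ ∈ o) := by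
    rcases aux_unit_or_pdvd hϖo hϖ hY with h | ⟨c, hc, hYc⟩
    · exact Or.inl h
    · refine Or.inr ⟨⟨c, hc, hYc⟩, ?_⟩
      rcases aux_unit_or_pdvd hϖo hϖ hX with h | ⟨cx, hcx, hXc⟩
      · exact h
      · exfalso
        obtain ⟨hdm, hd0, hdi⟩ := GLo_det_unit hg
        have hdet : g.det = ϖ * (g 0 0 * (cx + a1 * c) - c * g 1 0) := by
          rw [Matrix.det_fin_two]
          have h11 : g 1 1 = ϖ * (cx + a1 * c) := by
            have : g 1 1 = X + a1 * Y := by rw [hXdef, hYdef]; ring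
            rw [this, hXc, hYc]; ring
          rw [h11, ← hYdef, hYc]
          ring
        exact aux_not_both hϖo hϖ hdi
          (sub_mem (mul_mem (hge 0 0) (add_mem hcx (mul_mem ha1 hc))) (mul_mem hc (hge 1 0)))
          (mul_inv_cancel₀ hd0) hdet
  obtain ⟨hN0, hNi⟩ := Nunit hϖo hϖ ha0 ha1 hirr hX hY hcase
  obtain ⟨h1, h2⟩ := mul_inv_pair a0 a1 X Y hN0
  have huOLx := OLx_mem' ha0 ha1 hX hY hN0 hNi
  have huGLo := OLx_sub_GLo ha0 ha1 huOLx
  have hu'GLo := GLo_inv huGLo h1 h2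
  refine ⟨_, huOLx, _, GLo_mul hu'GLo hg, ?_, ?_⟩
  · have e0 : X + a1 * Y = g 1 1 := by rw [hXdef, hYdef]; ring
    rw [Matrix.mul_apply, Fin.sum_univ_two, ← e0, ← hYdef]
    simp
    ring
  · rw [← mul_assoc, h1, one_mul]

lemma shiftT {p : F} (hp : p ∈ o) {T : Matrix (Fin 2) (Fin 2) F}
    (hT : T ∈ GLo o) (h01 : T 0 1 = 0) :
    ∃ T' ∈ GLo o, T * aM p = aM p * T' := by
  obtain ⟨hTe, -⟩ := id hT
  refine ⟨!![T 0 0, 0; p * T 1 0, T 1 1], ?_, ?_⟩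
  · obtain ⟨hdm, hd0, hdi⟩ := GLo_det_unit hT
    have hdet : (!![T 0 0, 0; p * T 1 0, T 1 1] : Matrix (Fin 2) (Fin 2) F).det = T.det := by
      rw [Matrix.det_fin_two, Matrix.det_fin_two]
      simp [h01]
    apply mem_GLo_of_det
    · intro i j
      fin_cases i <;> fin_cases j <;> simp <;>
        first
          | exact hTe 0 0
          | exact zero_mem _
          | exact mul_mem hp (hTe 1 0)
          | exact hTe 1 1
    · rw [hdet]; exact hd0
    · rw [hdet]; exact hdi
  · ext i j
    fin_cases i <;> fin_cases j <;>
      simp [aM, Matrix.mul_apply, Fin.sum_univ_two, h01] <;> ring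

end DecompSec
section SmithSec
variable {F : Type*} [Field F] {o : ValuationSubring F} [IsDiscreteValuationRing o]

lemma smith00 {ϖ : F} (hϖo : ϖ ∈ o) {M : Matrix (Fin 2) (Fin 2) F}
    (hMe : ∀ i j, M i j ∈ o) (ha : M 0 0 ≠ 0) (hai : (M 0 0)⁻¹ ∈ o)
    {l : ℕ} {w : F} (hw : w ∈ o) (hw0 : w ≠ 0) (hwi : w⁻¹ ∈ o)
    (hdet : M.det = ϖ ^ l * w) :
    ∃ k₁ ∈ GLo o, ∃ k₂ ∈ GLo o, M = k₁ * aM (ϖ ^ l) * k₂ := by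
  have hdet' : M 0 0 * M 1 1 - M 0 1 * M 1 0 = ϖ ^ l * w := by
    rw [← Matrix.det_fin_two]; exact hdet
  refine ⟨!![0, M 0 0; (M 0 0)⁻¹ * w, M 1 0], ?_, !![0, 1; 1, (M 0 0)⁻¹ * M 0 1], ?_, ?_⟩
  · apply mem_GLo_of_det
    · intro i j
      fin_cases i <;> fin_cases j <;> simp <;>
        first
          | exact zero_mem _
          | exact hMe 0 0
          | exact mul_mem hai hw
          | exact hMe 1 0
    · rw [Matrix.det_fin_two_of, zero_mul, zero_sub, ← mul_assoc, mul_inv_cancel₀ ha, one_mul]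
      exact neg_ne_zero.mpr hw0
    · rw [Matrix.det_fin_two_of, zero_mul, zero_sub, ← mul_assoc, mul_inv_cancel₀ ha, one_mul,
        inv_neg]
      exact neg_mem hwi
  · apply mem_GLo_of_det
    · intro i j
      fin_cases i <;> fin_cases j <;> simp <;>
        first
          | exact zero_mem _
          | exact one_mem _
          | exact mul_mem hai (hMe 0 1)
    · rw [Matrix.det_fin_two_of]
      norm_num
    · rw [Matrix.det_fin_two_of]
      norm_num
  · ext i j
    fin_cases i <;> fin_cases j <;>
      simp [aM, Matrix.mul_apply, Fin.sum_univ_two] <;> field_simp <;>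
      linear_combination hdet'

end SmithSec
section SmithMain
variable {F : Type*} [Field F] {o : ValuationSubring F} [IsDiscreteValuationRing o]

lemma S_GLo : (!![(0:F), 1; 1, 0] : Matrix (Fin 2) (Fin 2) F) ∈ GLo o := by
  apply mem_GLo_of_det
  · intro i j
    fin_cases i <;> fin_cases j <;> simp <;>
      first | exact zero_mem _ | exact one_mem _
  · rw [Matrix.det_fin_two_of]; norm_num
  · rw [Matrix.det_fin_two_of]; norm_num

lemma S_mul_S : (!![(0:F), 1; 1, 0] : Matrix (Fin 2) (Fin 2) F) * !![(0:F), 1; 1, 0] = 1 := by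
  ext i j
  fin_cases i <;> fin_cases j <;>
    simp [Matrix.mul_apply, Fin.sum_univ_two, Matrix.one_fin_two]

lemma smith {ϖ : F} (hϖo : ϖ ∈ o) (hϖ : Irreducible (⟨ϖ, hϖo⟩ : o)) :
    ∀ dd : ℕ, ∀ M : Matrix (Fin 2) (Fin 2) F, (∀ i j, M i j ∈ o) →
    ∀ w : F, w ∈ o → w ≠ 0 → w⁻¹ ∈ o → M.det = ϖ ^ dd * w →
    ∃ (n l : ℕ), ∃ k₁ ∈ GLo o, ∃ k₂ ∈ GLo o, M = (ϖ ^ n) • (k₁ * aM (ϖ ^ l) * k₂) := by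
  intro dd
  induction dd using Nat.strong_induction_on with
  | _ dd IH =>
    intro M hMe w hw hw0 hwi hdet
    have hπ0 : ϖ ≠ 0 := aux_pne hϖo hϖ
    by_cases hall : ∀ i j, ∃ d ∈ o, M i j = ϖ * d
    · have hM'e : ∀ i j, (ϖ⁻¹ • M) i j ∈ o := by
        intro i j
        obtain ⟨d, hd, hMd⟩ := hall i j
        have : (ϖ⁻¹ • M) i j = d := by
          rw [Matrix.smul_apply, hMd, smul_eq_mul, ← mul_assoc, inv_mul_cancel₀ hπ0, one_mul]
        rw [this]; exact hd
      have hM'det : (ϖ⁻¹ • M).det = ϖ⁻¹ ^ 2 * M.det := by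
        rw [Matrix.det_smul]; simp
      have hMdet2 : M.det = ϖ ^ 2 * (ϖ⁻¹ • M).det := by
        rw [hM'det]; field_simp
      have hM'o : (ϖ⁻¹ • M).det ∈ o := by
        rw [Matrix.det_fin_two]
        exact sub_mem (mul_mem (hM'e 0 0) (hM'e 1 1)) (mul_mem (hM'e 0 1) (hM'e 1 0))
      have hdd2 : 2 ≤ dd := by
        by_contra hlt
        interval_cases dd
        · apply aux_not_both hϖo hϖ hwi (mul_mem hϖo hM'o) (mul_inv_cancel₀ hw0)
          rw [pow_zero, one_mul] at hdet
          rw [← hdet, hMdet2]; ring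
        · apply aux_not_both hϖo hϖ hwi hM'o (mul_inv_cancel₀ hw0)
          apply mul_left_cancel₀ hπ0
          rw [← mul_assoc, ← pow_two, ← hMdet2, hdet, pow_one]
      have hdet' : (ϖ⁻¹ • M).det = ϖ ^ (dd - 2) * w := by
        apply mul_left_cancel₀ (pow_ne_zero 2 hπ0)
        rw [← hMdet2, hdet, ← mul_assoc, ← pow_add]
        congr 2
        omega
      obtain ⟨n, l, k₁, hk₁, k₂, hk₂, hMd⟩ :=
        IH (dd - 2) (by omega) (ϖ⁻¹ • M) hM'e w hw hw0 hwi hdet'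
      refine ⟨n + 1, l, k₁, hk₁, k₂, hk₂, ?_⟩
      have : M = ϖ • (ϖ⁻¹ • M) := by
        rw [smul_smul, mul_inv_cancel₀ hπ0, one_smul]
      rw [this, hMd, smul_smul, ← pow_succ']
    · push_neg at hall
      obtain ⟨i, j, hij⟩ := hall
      have huij : M i j ≠ 0 ∧ (M i j)⁻¹ ∈ o := by
        rcases aux_unit_or_pdvd hϖo hϖ (hMe i j) with h | ⟨d, hd, h⟩
        · exact h
        · exact absurd h (hij d hd)
      set S : Matrix (Fin 2) (Fin 2) F := !![(0:F), 1; 1, 0] with hSdef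
      have hSe : ∀ (A : Matrix (Fin 2) (Fin 2) F), (A * S) 0 0 = A 0 1 ∧ (S * A) 0 0 = A 1 0
          ∧ (S * A) 0 1 = A 1 1 := by
        intro A
        refine ⟨?_, ?_, ?_⟩ <;> · rw [Matrix.mul_apply, Fin.sum_univ_two]; simp [hSdef]
      have hdetS : S.det = -1 := by rw [hSdef, Matrix.det_fin_two_of]; norm_num
      fin_cases i <;> fin_cases j
      · obtain ⟨k₁, hk₁, k₂, hk₂, hMd⟩ := smith00 hϖo hMe huij.1 huij.2 hw hw0 hwi hdet
        exact ⟨0, dd, k₁, hk₁, k₂, hk₂, by rw [pow_zero, one_smul]; exact hMd⟩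
      · have h00 : (M * S) 0 0 = M 0 1 := (hSe M).1
        have hdet2 : (M * S).det = ϖ ^ dd * (-w) := by
          rw [Matrix.det_mul, hdetS, hdet]; ring
        obtain ⟨k₁, hk₁, k₂, hk₂, hMd⟩ := smith00 hϖo
          (entries_mul hMe (S_GLo (o := o)).1) (h00 ▸ huij.1) (h00 ▸ huij.2)
          (neg_mem hw) (neg_ne_zero.mpr hw0) (by rw [inv_neg]; exact neg_mem hwi) hdet2
        refine ⟨0, dd, k₁, hk₁, k₂ * S, GLo_mul hk₂ S_GLo, ?_⟩
        rw [pow_zero, one_smul, ← mul_assoc, ← hMd, mul_assoc, S_mul_S, mul_one]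
      · have h00 : (S * M) 0 0 = M 1 0 := (hSe M).2.1
        have hdet2 : (S * M).det = ϖ ^ dd * (-w) := by
          rw [Matrix.det_mul, hdetS, hdet]; ring
        obtain ⟨k₁, hk₁, k₂, hk₂, hMd⟩ := smith00 hϖo
          (entries_mul (S_GLo (o := o)).1 hMe) (h00 ▸ huij.1) (h00 ▸ huij.2)
          (neg_mem hw) (neg_ne_zero.mpr hw0) (by rw [inv_neg]; exact neg_mem hwi) hdet2
        refine ⟨0, dd, S * k₁, GLo_mul S_GLo hk₁, k₂, hk₂, ?_⟩
        rw [pow_zero, one_smul]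
        calc M = S * (S * M) := by rw [← mul_assoc, S_mul_S, one_mul]
        _ = S * (k₁ * aM (ϖ ^ dd) * k₂) := by rw [hMd]
        _ = S * k₁ * aM (ϖ ^ dd) * k₂ := by simp only [mul_assoc]
      · have h00 : (S * M * S) 0 0 = M 1 1 := by
          rw [(hSe (S * M)).1, (hSe M).2.2]
        have hdet2 : (S * M * S).det = ϖ ^ dd * w := by
          rw [Matrix.det_mul, Matrix.det_mul, hdetS, hdet]; ring
        obtain ⟨k₁, hk₁, k₂, hk₂, hMd⟩ := smith00 hϖo
          (entries_mul (entries_mul (S_GLo (o := o)).1 hMe) (S_GLo (o := o)).1)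
          (h00 ▸ huij.1) (h00 ▸ huij.2) hw hw0 hwi hdet2
        refine ⟨0, dd, S * k₁, GLo_mul S_GLo hk₁, k₂ * S, GLo_mul hk₂ S_GLo, ?_⟩
        rw [pow_zero, one_smul]
        calc M = S * (S * M * S) * S := by
              rw [← mul_assoc, ← mul_assoc, S_mul_S, one_mul, mul_assoc, S_mul_S, mul_one]
        _ = S * (k₁ * aM (ϖ ^ dd) * k₂) * S := by rw [hMd]
        _ = S * k₁ * aM (ϖ ^ dd) * (k₂ * S) := by simp only [mul_assoc]

end SmithMain
section KeySec
variable {F : Type*} [Field F] {o : ValuationSubring F} [IsDiscreteValuationRing o]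

lemma entries_aM {ϖ : F} (hϖo : ϖ ∈ o) (p : ℕ) : ∀ i j, aM (ϖ ^ p) i j ∈ o := by
  intro i j
  fin_cases i <;> fin_cases j <;> simp [aM] <;>
    first | exact pow_mem hϖo p | exact zero_mem _ | exact one_mem _

lemma det_aM (p : F) : (aM p).det = p := by
  rw [aM, Matrix.det_fin_two_of]; ring

lemma entries_pdvd_mul {ϖ : F} {A M B : Matrix (Fin 2) (Fin 2) F}
    (hAe : ∀ i j, A i j ∈ o) (hBe : ∀ i j, B i j ∈ o)
    (hM : ∀ i j, ∃ d ∈ o, M i j = ϖ * d) : ∀ i j, ∃ d ∈ o, (A * M * B) i j = ϖ * d := by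
  intro i j
  obtain ⟨d00, hd00, e00⟩ := hM 0 0
  obtain ⟨d01, hd01, e01⟩ := hM 0 1
  obtain ⟨d10, hd10, e10⟩ := hM 1 0
  obtain ⟨d11, hd11, e11⟩ := hM 1 1
  refine ⟨A i 0 * d00 * B 0 j + A i 0 * d01 * B 1 j + A i 1 * d10 * B 0 j + A i 1 * d11 * B 1 j,
    ?_, ?_⟩
  · exact add_mem (add_mem (add_mem (mul_mem (mul_mem (hAe i 0) hd00) (hBe 0 j))
      (mul_mem (mul_mem (hAe i 0) hd01) (hBe 1 j)))
      (mul_mem (mul_mem (hAe i 1) hd10) (hBe 0 j)))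
      (mul_mem (mul_mem (hAe i 1) hd11) (hBe 1 j))
  · simp only [Matrix.mul_apply, Fin.sum_univ_two]
    rw [e00, e01, e10, e11]
    ring

lemma notdvd {ϖ : F} (hϖo : ϖ ∈ o) (hϖ : Irreducible (⟨ϖ, hϖo⟩ : o))
    {A B : Matrix (Fin 2) (Fin 2) F} (hA : A ∈ GLo o) (hB : B ∈ GLo o) (l : ℕ) :
    ¬ ∀ i j, ∃ d ∈ o, (A * aM (ϖ ^ l) * B) i j = ϖ * d := by
  intro h
  obtain ⟨hAe, A', hA'e, hA1, hA2⟩ := hA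
  obtain ⟨hBe, B', hB'e, hB1, hB2⟩ := hB
  have hrec : aM (ϖ ^ l) = A' * (A * aM (ϖ ^ l) * B) * B' := by
    calc aM (ϖ ^ l) = 1 * aM (ϖ ^ l) * 1 := by rw [one_mul, mul_one]
    _ = (A' * A) * aM (ϖ ^ l) * (B * B') := by rw [hA2, hB1]
    _ = A' * (A * aM (ϖ ^ l) * B) * B' := by simp only [mul_assoc]
  obtain ⟨d, hd, hdeq⟩ := (entries_pdvd_mul hA'e hB'e h) 1 1
  have h11 : aM (ϖ ^ l) 1 1 = 1 := by simp [aM]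
  rw [← hrec, h11] at hdeq
  exact aux_not_both hϖo hϖ (one_mem o) hd (one_mul 1) hdeq

lemma pow_unit_eq {ϖ : F} (hϖo : ϖ ∈ o) (hϖ : Irreducible (⟨ϖ, hϖo⟩ : o))
    {u v : F} (hu : u ∈ o) (hui : u⁻¹ ∈ o) (hu0 : u ≠ 0) (hv : v ∈ o) (hvi : v⁻¹ ∈ o)
    (hv0 : v ≠ 0) {l l' : ℕ} (h : u * ϖ ^ l = v * ϖ ^ l') : l = l' := by
  have hπ0 : ϖ ≠ 0 := aux_pne hϖo hϖ
  rcases le_or_gt l l' with hle | hlt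
  · by_contra hne
    obtain ⟨k, hk⟩ : ∃ k, l' = k + 1 + l := ⟨l' - l - 1, by omega⟩
    have : u = ϖ * (v * ϖ ^ k) := by
      apply mul_right_cancel₀ (pow_ne_zero l hπ0)
      rw [h, hk, pow_add, pow_add]
      ring
    exact aux_not_both hϖo hϖ hui (mul_mem hv (pow_mem hϖo _)) (mul_inv_cancel₀ hu0) this
  · exfalso
    obtain ⟨k, hk⟩ : ∃ k, l = k + 1 + l' := ⟨l - l' - 1, by omega⟩
    have : v = ϖ * (u * ϖ ^ k) := by
      apply mul_right_cancel₀ (pow_ne_zero l' hπ0)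
      rw [← h, hk, pow_add, pow_add]
      ring
    exact aux_not_both hϖo hϖ hvi (mul_mem hu (pow_mem hϖo _)) (mul_inv_cancel₀ hv0) this

lemma key_uniq {ϖ : F} (hϖo : ϖ ∈ o) (hϖ : Irreducible (⟨ϖ, hϖo⟩ : o))
    {A B C D : Matrix (Fin 2) (Fin 2) F} (hA : A ∈ GLo o) (hB : B ∈ GLo o)
    (hC : C ∈ GLo o) (hD : D ∈ GLo o) {z z' : ℤ} {l l' : ℕ}
    (h : (ϖ ^ z : F) • (A * aM (ϖ ^ l) * B) = (ϖ ^ z' : F) • (C * aM (ϖ ^ l') * D)) :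
    l = l' := by
  have hπ0 : ϖ ≠ 0 := aux_pne hϖo hϖ
  have hgen : ∀ (z z' : ℤ) (A B C D : Matrix (Fin 2) (Fin 2) F) (l l' : ℕ),
      A ∈ GLo o → B ∈ GLo o → C ∈ GLo o → D ∈ GLo o →
      (ϖ ^ z : F) • (A * aM (ϖ ^ l) * B) = (ϖ ^ z' : F) • (C * aM (ϖ ^ l') * D) →
      z < z' → False := by
    clear h hA hB hC hD
    intro z z' A B C D l l' hA hB hC hD h hlt
    apply notdvd hϖo hϖ hA hB l
    intro i j
    have he : (A * aM (ϖ ^ l) * B) i j = ϖ ^ (z' - z : ℤ) * (C * aM (ϖ ^ l') * D) i j := by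
      have hthis := congrFun (congrFun h i) j
      simp only [Matrix.smul_apply, smul_eq_mul] at hthis
      apply mul_left_cancel₀ (zpow_ne_zero z hπ0 : (ϖ : F) ^ z ≠ 0)
      rw [← mul_assoc, ← zpow_add₀ hπ0, show z + (z' - z) = z' by omega]
      exact hthis
    have hnn : ϖ ^ (z' - z : ℤ) = ϖ * ϖ ^ ((z' - z - 1).toNat) := by
      rw [← zpow_natCast ϖ ((z' - z - 1).toNat), Int.toNat_of_nonneg (by omega),
        show ϖ * ϖ ^ (z' - z - 1 : ℤ) = ϖ ^ (1 + (z' - z - 1) : ℤ) by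
          rw [zpow_add₀ hπ0, zpow_one]]
      congr 1
      omega
    refine ⟨ϖ ^ ((z' - z - 1).toNat) * (C * aM (ϖ ^ l') * D) i j, ?_, ?_⟩
    · exact mul_mem (pow_mem hϖo _) (entries_mul (entries_mul hC.1 (entries_aM hϖo l')) hD.1 i j)
    · rw [he, hnn]; ring
  have hzz : z = z' := by
    by_contra hne
    rcases lt_or_gt_of_ne hne with hlt | hlt
    · exact hgen z z' A B C D l l' hA hB hC hD h hlt
    · exact hgen z' z C D A B l' l hC hD hA hB h.symm hlt
  subst hzz
  have hMM : A * aM (ϖ ^ l) * B = C * aM (ϖ ^ l') * D := by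
    have hz0 : (ϖ ^ z : F) ≠ 0 := zpow_ne_zero z hπ0
    ext i j
    have := congrFun (congrFun h i) j
    simp only [Matrix.smul_apply, smul_eq_mul] at this
    exact mul_left_cancel₀ hz0 this
  have hdet := congrArg Matrix.det hMM
  rw [Matrix.det_mul, Matrix.det_mul, Matrix.det_mul, Matrix.det_mul, det_aM, det_aM] at hdet
  obtain ⟨hAm, hA0, hAi⟩ := GLo_det_unit hA
  obtain ⟨hBm, hB0, hBi⟩ := GLo_det_unit hB
  obtain ⟨hCm, hC0, hCi⟩ := GLo_det_unit hC
  obtain ⟨hDm, hD0, hDi⟩ := GLo_det_unit hD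
  refine pow_unit_eq hϖo hϖ (mul_mem hAm hBm) ?_ (mul_ne_zero hA0 hB0)
    (mul_mem hCm hDm) ?_ (mul_ne_zero hC0 hD0) ?_
  · rw [mul_inv]; exact mul_mem hAi hBi
  · rw [mul_inv]; exact mul_mem hCi hDi
  · linear_combination hdet
end KeySec
section BoundSec
variable {F : Type*} [Field F] {o : ValuationSubring F} [IsDiscreteValuationRing o]

lemma aux_bound {ϖ : F} (hϖo : ϖ ∈ o) (hϖ : Irreducible (⟨ϖ, hϖo⟩ : o)) (x : F) :
    ∃ N : ℕ, ϖ ^ N * x ∈ o := by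
  by_cases hx : x ∈ o
  · exact ⟨0, by rwa [pow_zero, one_mul]⟩
  · have hxi : x⁻¹ ∈ o := (o.mem_or_inv_mem x).resolve_left hx
    have hx0 : x ≠ 0 := fun h => hx (h ▸ zero_mem _)
    have hπ0 : ϖ ≠ 0 := aux_pne hϖo hϖ
    obtain ⟨l, w, hwo, hw0, hwi, hfac⟩ := aux_fact hϖo hϖ hxi (inv_ne_zero hx0)
    refine ⟨l, ?_⟩
    have hx' : x = (ϖ ^ l * w)⁻¹ := by rw [← hfac, inv_inv]
    have : ϖ ^ l * x = w⁻¹ := by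
      rw [hx', mul_inv, ← mul_assoc, mul_inv_cancel₀ (pow_ne_zero l hπ0), one_mul]
    rw [this]
    exact hwi

lemma aux_mono {ϖ : F} (hϖo : ϖ ∈ o) {x : F} {N N' : ℕ} (h : ϖ ^ N * x ∈ o) (hle : N ≤ N') :
    ϖ ^ N' * x ∈ o := by
  rw [show N' = (N' - N) + N by omega, pow_add, mul_assoc]
  exact mul_mem (pow_mem hϖo _) h

lemma aux_bound_mat {ϖ : F} (hϖo : ϖ ∈ o) (hϖ : Irreducible (⟨ϖ, hϖo⟩ : o))
    (g : Matrix (Fin 2) (Fin 2) F) : ∃ N : ℕ, ∀ i j, ϖ ^ N * g i j ∈ o := by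
  choose Nf hNf using fun i j => aux_bound hϖo hϖ (g i j)
  refine ⟨Nf 0 0 + Nf 0 1 + Nf 1 0 + Nf 1 1, fun i j => ?_⟩
  fin_cases i <;> fin_cases j <;>
    first
      | exact aux_mono hϖo (hNf 0 0) (by omega)
      | exact aux_mono hϖo (hNf 0 1) (by omega)
      | exact aux_mono hϖo (hNf 1 0) (by omega)
      | exact aux_mono hϖo (hNf 1 1) (by omega)

lemma aux_zfact {ϖ : F} (hϖo : ϖ ∈ o) (hϖ : Irreducible (⟨ϖ, hϖo⟩ : o))
    {x : F} (hx0 : x ≠ 0) :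
    ∃ (t : ℤ) (w : F), w ∈ o ∧ w ≠ 0 ∧ w⁻¹ ∈ o ∧ x = (ϖ ^ t : F) * w := by
  have hπ0 : ϖ ≠ 0 := aux_pne hϖo hϖ
  rcases o.mem_or_inv_mem x with hx | hxi
  · obtain ⟨l, w, hwo, hw0, hwi, hfac⟩ := aux_fact hϖo hϖ hx hx0
    exact ⟨l, w, hwo, hw0, hwi, by rw [hfac, zpow_natCast]⟩
  · obtain ⟨l, w, hwo, hw0, hwi, hfac⟩ := aux_fact hϖo hϖ hxi (inv_ne_zero hx0)
    refine ⟨-(l : ℤ), w⁻¹, hwi, inv_ne_zero hw0, by rwa [inv_inv], ?_⟩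
    rw [← inv_inv x, hfac, mul_inv, zpow_neg, zpow_natCast]

lemma scale_repr (a0 a1 : F) {x y X Y c : F} (hx' : x = c * X) (hy' : y = c * Y) :
    x • (1 : Matrix (Fin 2) (Fin 2) F) + y • !![0, 1; a0, a1] =
      c • !![X, Y; a0 * Y, X + a1 * Y] := by
  rw [repr_eq]
  ext i j
  fin_cases i <;> fin_cases j <;> simp [Matrix.smul_apply, smul_eq_mul] <;>
    first
      | linear_combination hx'
      | linear_combination hy'
      | linear_combination a0 * hy'
      | linear_combination hx' + a1 * hy'

end BoundSec
section LxSec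
variable {F : Type*} [Field F] {o : ValuationSubring F} [IsDiscreteValuationRing o]

lemma Lx_factor {ϖ : F} (hϖo : ϖ ∈ o) (hϖ : Irreducible (⟨ϖ, hϖo⟩ : o))
    {a0 a1 : F} (ha0 : a0 ∈ o) (ha1 : a1 ∈ o) (ha0u : a0⁻¹ ∈ o) (ha0ne : a0 ≠ 0)
    (hirr : ∀ z : F, z ∈ o → ¬ ∃ d ∈ o, z ^ 2 - a1 * z - a0 = ϖ * d)
    {j : Matrix (Fin 2) (Fin 2) F} (hj : j ∈ Lx !![0, 1; a0, a1]) :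
    ∃ (t : ℤ) (u : Matrix (Fin 2) (Fin 2) F), u ∈ OLx o !![0, 1; a0, a1] ∧
      j = ((ϖ : F) ^ t) • u := by
  obtain ⟨⟨x, y, rfl⟩, m', -, h1, h2⟩ := hj
  have hπ0 : ϖ ≠ 0 := aux_pne hϖo hϖ
  have hne : ¬(x = 0 ∧ y = 0) := by
    rintro ⟨rfl, rfl⟩
    rw [zero_smul, zero_smul, add_zero, zero_mul] at h1
    have := congrFun (congrFun h1 0) 0
    simp [Matrix.one_fin_two] at this
  by_cases hy0 : y = 0
  · have hx0 : x ≠ 0 := fun h => hne ⟨h, hy0⟩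
    obtain ⟨t, w, hwo, hw0, hwi, hfac⟩ := aux_zfact hϖo hϖ hx0
    refine ⟨t, _, OLx_mem' ha0 ha1 hwo (zero_mem o) ?_ ?_,
      scale_repr a0 a1 (by rw [hfac]) (by rw [hy0, mul_zero])⟩
    · rw [show w ^ 2 + a1 * w * 0 - a0 * 0 ^ 2 = w * w from by ring]
      exact mul_ne_zero hw0 hw0
    · rw [show w ^ 2 + a1 * w * 0 - a0 * 0 ^ 2 = w * w from by ring, mul_inv]
      exact mul_mem hwi hwi
  · by_cases hx0 : x = 0
    · obtain ⟨t, w, hwo, hw0, hwi, hfac⟩ := aux_zfact hϖo hϖ hy0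
      refine ⟨t, _, OLx_mem' ha0 ha1 (zero_mem o) hwo ?_ ?_,
        scale_repr a0 a1 (by rw [hx0, mul_zero]) (by rw [hfac])⟩
      · rw [show (0:F) ^ 2 + a1 * 0 * w - a0 * w ^ 2 = -(a0 * (w * w)) from by ring]
        exact neg_ne_zero.mpr (mul_ne_zero ha0ne (mul_ne_zero hw0 hw0))
      · rw [show (0:F) ^ 2 + a1 * 0 * w - a0 * w ^ 2 = -(a0 * (w * w)) from by ring,
          inv_neg, mul_inv, mul_inv]
        exact neg_mem (mul_mem ha0u (mul_mem hwi hwi))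
    · obtain ⟨t1, w1, hw1o, hw10, hw1i, hfac1⟩ := aux_zfact hϖo hϖ hx0
      obtain ⟨t2, w2, hw2o, hw20, hw2i, hfac2⟩ := aux_zfact hϖo hϖ hy0
      set t := min t1 t2 with htdef
      set X := ϖ ^ ((t1 - t).toNat) * w1 with hXdef
      set Y := ϖ ^ ((t2 - t).toNat) * w2 with hYdef
      have hXo : X ∈ o := mul_mem (pow_mem hϖo _) hw1o
      have hYo : Y ∈ o := mul_mem (pow_mem hϖo _) hw2o
      have ht1 : t ≤ t1 := min_le_left _ _
      have ht2 : t ≤ t2 := min_le_right _ _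
      have hx' : x = (ϖ : F) ^ t * X := by
        rw [hfac1, hXdef, ← mul_assoc, ← zpow_natCast ϖ ((t1 - t).toNat),
          Int.toNat_of_nonneg (by omega), ← zpow_add₀ hπ0,
          show t + (t1 - t) = t1 by ring]
      have hy' : y = (ϖ : F) ^ t * Y := by
        rw [hfac2, hYdef, ← mul_assoc, ← zpow_natCast ϖ ((t2 - t).toNat),
          Int.toNat_of_nonneg (by omega), ← zpow_add₀ hπ0,
          show t + (t2 - t) = t2 by ring]
      have hcase : (Y ≠ 0 ∧ Y⁻¹ ∈ o) ∨ ((∃ c ∈ o, Y = ϖ * c) ∧ X ≠ 0 ∧ X⁻¹ ∈ o) := by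
        rcases le_or_gt t2 t1 with hle | hlt
        · left
          have hmin : t = t2 := min_eq_right hle
          have hY2 : Y = w2 := by
            rw [hYdef, show (t2 - t).toNat = 0 by omega, pow_zero, one_mul]
          rw [hY2]
          exact ⟨hw20, hw2i⟩
        · right
          have hmin : t = t1 := min_eq_left (le_of_lt hlt)
          have hX1 : X = w1 := by
            rw [hXdef, show (t1 - t).toNat = 0 by omega, pow_zero, one_mul]
          obtain ⟨k, hk⟩ : ∃ k, (t2 - t).toNat = k + 1 := ⟨(t2 - t).toNat - 1, by omega⟩
          refine ⟨⟨ϖ ^ k * w2, mul_mem (pow_mem hϖo _) hw2o, ?_⟩, ?_, ?_⟩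
          · rw [hYdef, hk, pow_succ]
            ring
          · rw [hX1]; exact hw10
          · rw [hX1]; exact hw1i
      obtain ⟨hN0, hNi⟩ := Nunit hϖo hϖ ha0 ha1 hirr hXo hYo hcase
      exact ⟨t, _, OLx_mem' ha0 ha1 hXo hYo hN0 hNi, scale_repr a0 a1 hx' hy'⟩

end LxSec
/-- (i) For every `l ≥ 0` the Cartan double coset satisfies
`GL₂(𝔬)·a(ϖ^l)·GL₂(𝔬) = 𝒪_L^×·a(ϖ^l)·GL₂(𝔬) = J⁰·a(ϖ^l)·GL₂(𝔬)` with
`J⁰ = 𝒪_L^×·K(𝔭^{m+1})`, for any `m ∈ ℕ`.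
(ii) For every `m ∈ ℕ`, `GL₂(F)` is the disjoint union over `l ∈ ℕ` of the sets
`J·a(ϖ^l)·GL₂(𝔬)` where `J = L^×·K(𝔭^{m+1})`. -/
theorem stmt_12 {F : Type*} [Field F]
    (o : ValuationSubring F) [IsDiscreteValuationRing o]
    (ϖ : F) (hϖo : ϖ ∈ o) (hϖ : Irreducible (⟨ϖ, hϖo⟩ : o))
    (a0 a1 : F) (ha0 : a0 ∈ o) (ha1 : a1 ∈ o) (ha0u : a0⁻¹ ∈ o) (ha0ne : a0 ≠ 0)
    (hirr : ∀ z : F, z ∈ o → ¬ ∃ d ∈ o, z ^ 2 - a1 * z - a0 = ϖ * d) :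
    (∀ l m : ℕ,
      ({g | ∃ k₁ ∈ GLo o, ∃ k₂ ∈ GLo o, g = k₁ * aM (ϖ ^ l) * k₂} :
          Set (Matrix (Fin 2) (Fin 2) F)) =
        {g | ∃ u ∈ OLx o !![0, 1; a0, a1], ∃ k ∈ GLo o, g = u * aM (ϖ ^ l) * k} ∧
      ({g | ∃ k₁ ∈ GLo o, ∃ k₂ ∈ GLo o, g = k₁ * aM (ϖ ^ l) * k₂} :
          Set (Matrix (Fin 2) (Fin 2) F)) =
        {g | ∃ u ∈ OLx o !![0, 1; a0, a1], ∃ x ∈ Kpm o ϖ (m + 1), ∃ k ∈ GLo o,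
          g = u * x * aM (ϖ ^ l) * k}) ∧
    (∀ m : ℕ, ∀ g : Matrix (Fin 2) (Fin 2) F, IsUnit g →
      ∃! l : ℕ, ∃ j₁ ∈ Lx !![0, 1; a0, a1], ∃ j₂ ∈ Kpm o ϖ (m + 1), ∃ k ∈ GLo o,
        g = j₁ * j₂ * aM (ϖ ^ l) * k) := by
  have hπ0 : ϖ ≠ 0 := aux_pne hϖo hϖ
  have hKpm_one : ∀ m : ℕ, (1 : Matrix (Fin 2) (Fin 2) F) ∈ Kpm o ϖ (m + 1) :=
    fun m => ⟨GLo_one, fun i j => ⟨0, zero_mem _, by rw [sub_self, mul_zero]⟩⟩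
  constructor
  · intro l m
    constructor
    · ext g
      simp only [Set.mem_setOf_eq]
      constructor
      · rintro ⟨k₁, hk₁, k₂, hk₂, rfl⟩
        obtain ⟨u, huOLx, T, hT, hT01, hk1eq⟩ := decompK hϖo hϖ ha0 ha1 hirr hk₁
        obtain ⟨T', hT', hshift⟩ := shiftT (pow_mem hϖo l) hT hT01
        refine ⟨u, huOLx, T' * k₂, GLo_mul hT' hk₂, ?_⟩
        rw [hk1eq, mul_assoc u T (aM (ϖ ^ l)), hshift]
        simp only [mul_assoc]
      · rintro ⟨u, hu, k, hk, rfl⟩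
        exact ⟨u, OLx_sub_GLo ha0 ha1 hu, k, hk, rfl⟩
    · ext g
      simp only [Set.mem_setOf_eq]
      constructor
      · rintro ⟨k₁, hk₁, k₂, hk₂, rfl⟩
        obtain ⟨u, huOLx, T, hT, hT01, hk1eq⟩ := decompK hϖo hϖ ha0 ha1 hirr hk₁
        obtain ⟨T', hT', hshift⟩ := shiftT (pow_mem hϖo l) hT hT01
        refine ⟨u, huOLx, 1, hKpm_one m, T' * k₂, GLo_mul hT' hk₂, ?_⟩
        rw [hk1eq, mul_assoc u T (aM (ϖ ^ l)), hshift]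
        simp only [mul_one, mul_assoc]
      · rintro ⟨u, hu, xk, hxk, k, hk, rfl⟩
        exact ⟨u * xk, GLo_mul (OLx_sub_GLo ha0 ha1 hu) hxk.1, k, hk, by
          simp only [mul_assoc]⟩
  · intro m g hg
    have hdet0 : g.det ≠ 0 := ((Matrix.isUnit_iff_isUnit_det g).mp hg).ne_zero
    obtain ⟨N, hN⟩ := aux_bound_mat hϖo hϖ g
    set M := ((ϖ : F) ^ N) • g with hMdef
    have hMe : ∀ i j, M i j ∈ o := fun i j => by
      rw [hMdef, Matrix.smul_apply, smul_eq_mul]; exact hN i j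
    have hMdet0 : M.det ≠ 0 := by
      rw [hMdef, Matrix.det_smul]
      exact mul_ne_zero (pow_ne_zero _ (pow_ne_zero _ hπ0)) hdet0
    have hMdeto : M.det ∈ o := by
      rw [Matrix.det_fin_two]
      exact sub_mem (mul_mem (hMe 0 0) (hMe 1 1)) (mul_mem (hMe 0 1) (hMe 1 0))
    obtain ⟨dd, w, hwo, hw0, hwi, hfac⟩ := aux_fact hϖo hϖ hMdeto hMdet0
    obtain ⟨n, l, k₁, hk₁, k₂, hk₂, hMdec⟩ := smith hϖo hϖ dd M hMe w hwo hw0 hwi hfac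
    obtain ⟨u, huOLx, T, hT, hT01, hk1eq⟩ := decompK hϖo hϖ ha0 ha1 hirr hk₁
    obtain ⟨T', hT', hshift⟩ := shiftT (pow_mem hϖo l) hT hT01
    set z : ℤ := (n : ℤ) - N with hzdef
    have hg_eq : g = ((ϖ : F) ^ z) • (u * aM (ϖ ^ l) * (T' * k₂)) := by
      have h1 : g = ((ϖ : F) ^ N)⁻¹ • M := by
        rw [hMdef, smul_smul, inv_mul_cancel₀ (pow_ne_zero _ hπ0), one_smul]
      rw [h1, hMdec, smul_smul]
      congr 1
      · rw [hzdef, zpow_sub₀ hπ0, zpow_natCast, zpow_natCast, div_eq_mul_inv, mul_comm]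
      · rw [hk1eq, mul_assoc u T (aM (ϖ ^ l)), hshift]
        simp only [mul_assoc]
    obtain ⟨⟨xu, yu, hxu, hyu, hurepr⟩, u', ⟨pu, qu, hpu, hqu, hu'repr⟩, hu1, hu2⟩ := huOLx
    have huOLx' : u ∈ OLx o !![0, 1; a0, a1] :=
      ⟨⟨xu, yu, hxu, hyu, hurepr⟩, u', ⟨pu, qu, hpu, hqu, hu'repr⟩, hu1, hu2⟩
    have hj₁ : ((ϖ : F) ^ z) • u ∈ Lx !![0, 1; a0, a1] := by
      refine ⟨⟨ϖ ^ z * xu, ϖ ^ z * yu, ?_⟩, ((ϖ : F) ^ (-z)) • u',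
        ⟨ϖ ^ (-z) * pu, ϖ ^ (-z) * qu, ?_⟩, ?_, ?_⟩
      · rw [hurepr, smul_add, smul_smul, smul_smul]
      · rw [hu'repr, smul_add, smul_smul, smul_smul]
      · rw [smul_mul_assoc, mul_smul_comm, smul_smul, ← zpow_add₀ hπ0,
          show z + -z = 0 by ring, zpow_zero, one_smul, hu1]
      · rw [smul_mul_assoc, mul_smul_comm, smul_smul, ← zpow_add₀ hπ0,
          show -z + z = 0 by ring, zpow_zero, one_smul, hu2]
    refine ⟨l, ⟨((ϖ : F) ^ z) • u, hj₁, 1, hKpm_one m, T' * k₂, GLo_mul hT' hk₂, ?_⟩, ?_⟩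
    · rw [hg_eq]
      simp only [mul_one, smul_mul_assoc, mul_assoc]
    · intro l' hl'
      obtain ⟨j₁, hj1, j₂, hj2, k, hk, hgeq'⟩ := hl'
      obtain ⟨t, u₂, hu₂OLx, hj1eq⟩ := Lx_factor hϖo hϖ ha0 ha1 ha0u ha0ne hirr hj1
      have hcmp : ((ϖ : F) ^ t) • ((u₂ * j₂) * aM (ϖ ^ l') * k) =
          ((ϖ : F) ^ z) • (u * aM (ϖ ^ l) * (T' * k₂)) := by
        rw [← hg_eq, hgeq', hj1eq]
        simp only [smul_mul_assoc, mul_assoc]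
      exact key_uniq hϖo hϖ (GLo_mul (OLx_sub_GLo ha0 ha1 hu₂OLx) hj2.1) hk
        (OLx_sub_GLo ha0 ha1 huOLx') (GLo_mul hT' hk₂) hcmp
end

section
/- Let E/F be a quadratic field extension and let r ≥ 1 and c ≥ 1 be integers. Then K₀(𝔭^c)·ι_r(𝒪_r^×) = ⨆_{u ∈ 𝔬/𝔭^c} K₀(𝔭^c)·n₋(u) = { [[c₁,c₂],[c₃,c₄]] ∈ GL₂(𝔬) : c₄ ∈ 𝔬^× }; in particular this set is independent of c ≥ 1. -/
/-- `n₋(x) = [[1,0],[x,1]]`. -/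
def nmM {F : Type*} [Field F] (x : F) : Matrix (Fin 2) (Fin 2) F := !![1, 0; x, 1]

/-- `K₀(𝔭^c)`: elements of `GL₂(𝔬)` whose lower-left entry lies in `𝔭^c`. -/
def K0 {F : Type*} [Field F] (o : ValuationSubring F) (ϖ : F) (c : ℕ) :
    Set (Matrix (Fin 2) (Fin 2) F) :=
  {g | g ∈ GLo o ∧ ∃ d ∈ o, g 1 0 = ϖ ^ c * d}

/-- The order `𝒪_r = 𝔬 + ϖ^rβ𝔬 ⊆ E`. -/
def OrE {F E : Type*} [Field F] [Field E] [Algebra F E] (o : ValuationSubring F)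
    (ϖ : F) (β : E) (r : ℕ) : Set E :=
  {z | ∃ x y : F, x ∈ o ∧ y ∈ o ∧
    z = algebraMap F E x + algebraMap F E (ϖ ^ r * y) * β}

/-- The unit group `𝒪_r^×` (as a subset of `E`). -/
def OrEx {F E : Type*} [Field F] [Field E] [Algebra F E] (o : ValuationSubring F)
    (ϖ : F) (β : E) (r : ℕ) : Set E :=
  {z | z ∈ OrE o ϖ β r ∧ ∃ w ∈ OrE o ϖ β r, z * w = 1}

namespace S14
variable {F : Type*} [Field F] {o : ValuationSubring F}

lemma mem_entries_mul {A B : Matrix (Fin 2) (Fin 2) F} (hA : ∀ i j, A i j ∈ o)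
    (hB : ∀ i j, B i j ∈ o) : ∀ i j, (A * B) i j ∈ o := by
  intro i j
  rw [Matrix.mul_apply, Fin.sum_univ_two]
  exact add_mem (mul_mem (hA _ _) (hB _ _)) (mul_mem (hA _ _) (hB _ _))

lemma GLo_mul {A B : Matrix (Fin 2) (Fin 2) F} (hA : A ∈ GLo o) (hB : B ∈ GLo o) :
    A * B ∈ GLo o := by
  obtain ⟨hA1, A', hA2, hA3, hA4⟩ := hA
  obtain ⟨hB1, B', hB2, hB3, hB4⟩ := hB
  refine ⟨mem_entries_mul hA1 hB1, B' * A', mem_entries_mul hB2 hA2, ?_, ?_⟩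
  · rw [mul_assoc A B, ← mul_assoc B B', hB3, one_mul, hA3]
  · rw [mul_assoc B' A', ← mul_assoc A' A, hA4, one_mul, hB4]

lemma GLo_det {g : Matrix (Fin 2) (Fin 2) F} (hg : g ∈ GLo o) :
    g.det ∈ o ∧ g.det⁻¹ ∈ o ∧ g.det ≠ 0 := by
  obtain ⟨h1, h, h2, h3, h4⟩ := hg
  have hdet : g.det * h.det = 1 := by rw [← Matrix.det_mul, h3, Matrix.det_one]
  have hgo : g.det ∈ o := by
    rw [Matrix.det_fin_two]; exact sub_mem (mul_mem (h1 _ _) (h1 _ _)) (mul_mem (h1 _ _) (h1 _ _))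
  have hho : h.det ∈ o := by
    rw [Matrix.det_fin_two]; exact sub_mem (mul_mem (h2 _ _) (h2 _ _)) (mul_mem (h2 _ _) (h2 _ _))
  have hne : g.det ≠ 0 := left_ne_zero_of_mul_eq_one hdet
  have : g.det⁻¹ = h.det := inv_eq_of_mul_eq_one_right hdet
  exact ⟨hgo, this ▸ hho, hne⟩

lemma smul_adj_entries {g : Matrix (Fin 2) (Fin 2) F} (h0 : ∀ i j, g i j ∈ o)
    (h1 : g.det⁻¹ ∈ o) : ∀ i j, (g.det⁻¹ • g.adjugate) i j ∈ o := by
  intro i j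
  rw [Matrix.smul_apply, Matrix.adjugate_fin_two, smul_eq_mul]
  fin_cases i <;> fin_cases j <;> simp <;>
    first
      | exact mul_mem h1 (h0 _ _)
      | exact mul_mem h1 (neg_mem (h0 _ _))
      | exact neg_mem (mul_mem h1 (h0 _ _))

lemma GLo_of {g : Matrix (Fin 2) (Fin 2) F} (h0 : ∀ i j, g i j ∈ o)
    (h1 : g.det⁻¹ ∈ o) (h2 : g.det ≠ 0) : g ∈ GLo o := by
  refine ⟨h0, g.det⁻¹ • g.adjugate, smul_adj_entries h0 h1, ?_, ?_⟩
  · rw [Matrix.mul_smul, Matrix.mul_adjugate, smul_smul, inv_mul_cancel₀ h2, one_smul]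
  · rw [Matrix.smul_mul, Matrix.adjugate_mul, smul_smul, inv_mul_cancel₀ h2, one_smul]

lemma K0_mul {ϖ : F} {c : ℕ} {A B : Matrix (Fin 2) (Fin 2) F}
    (hA : A ∈ K0 o ϖ c) (hB : B ∈ K0 o ϖ c) : A * B ∈ K0 o ϖ c := by
  obtain ⟨hA1, dA, hdA, hdA2⟩ := hA
  obtain ⟨hB1, dB, hdB, hdB2⟩ := hB
  refine ⟨GLo_mul hA1 hB1, dA * B 0 0 + A 1 1 * dB, ?_, ?_⟩
  · exact add_mem (mul_mem hdA (hB1.1 _ _)) (mul_mem (hA1.1 _ _) hdB)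
  · rw [Matrix.mul_apply, Fin.sum_univ_two, hdA2, hdB2]; ring

lemma K0_inv {ϖ : F} {c : ℕ} {k : Matrix (Fin 2) (Fin 2) F}
    (hk : k ∈ K0 o ϖ c) : ∃ k' ∈ K0 o ϖ c, k * k' = 1 ∧ k' * k = 1 := by
  obtain ⟨hkG, d, hdo, hd⟩ := hk
  obtain ⟨hdet, hdeti, hdetne⟩ := GLo_det hkG
  have h1 : k * (k.det⁻¹ • k.adjugate) = 1 := by
    rw [Matrix.mul_smul, Matrix.mul_adjugate, smul_smul, inv_mul_cancel₀ hdetne, one_smul]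
  have h2 : (k.det⁻¹ • k.adjugate) * k = 1 := by
    rw [Matrix.smul_mul, Matrix.adjugate_mul, smul_smul, inv_mul_cancel₀ hdetne, one_smul]
  refine ⟨k.det⁻¹ • k.adjugate,
    ⟨⟨smul_adj_entries hkG.1 hdeti, k, hkG.1, h2, h1⟩,
      k.det⁻¹ * (-d), mul_mem hdeti (neg_mem hdo), ?_⟩, h1, h2⟩
  rw [Matrix.smul_apply, Matrix.adjugate_fin_two, smul_eq_mul]
  simp only [Matrix.cons_val', Matrix.cons_val_zero, Matrix.cons_val_one, Matrix.head_cons,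
    Matrix.empty_val', Matrix.cons_val_fin_one, Matrix.head_fin_const, Matrix.of_apply]
  rw [hd]; ring

lemma nmM_mul {u v : F} : nmM u * nmM v = nmM (u + v) := by
  unfold nmM; rw [Matrix.mul_fin_two]; norm_num [add_comm]

lemma nmM_zero : nmM (0 : F) = 1 := by
  unfold nmM; rw [Matrix.one_fin_two]

lemma nmM_GLo {u : F} (hu : u ∈ o) : nmM u ∈ GLo o := by
  refine ⟨?_, nmM (-u), ?_, ?_, ?_⟩
  · intro i j; fin_cases i <;> fin_cases j <;> simp [nmM] <;>
      first | exact one_mem o | exact zero_mem o | exact hu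
  · intro i j; fin_cases i <;> fin_cases j <;> simp [nmM] <;>
      first | exact one_mem o | exact zero_mem o | exact hu | exact neg_mem hu
  · rw [nmM_mul, add_neg_cancel, nmM_zero]
  · rw [nmM_mul, neg_add_cancel, nmM_zero]

lemma nmM_entry (u : F) : nmM u 1 0 = u := by simp [nmM]
lemma nmM_00 (u : F) : nmM u 0 0 = 1 := by simp [nmM]
lemma nmM_01 (u : F) : nmM u 0 1 = 0 := by simp [nmM]
lemma nmM_11 (u : F) : nmM u 1 1 = 1 := by simp [nmM]

lemma nmM_K0 {ϖ u : F} {c : ℕ} (hu : u ∈ o) (hd : ∃ d ∈ o, u = ϖ ^ c * d) :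
    nmM u ∈ K0 o ϖ c := by
  obtain ⟨d, hdo, hdu⟩ := hd
  exact ⟨nmM_GLo hu, d, hdo, by rw [nmM_entry, hdu]⟩

lemma ou_of_isUnit {x : F} (hx : x ∈ o) (h : IsUnit (⟨x, hx⟩ : o)) : x⁻¹ ∈ o ∧ x ≠ 0 := by
  obtain ⟨u, hu⟩ := h
  have h1 : x * (((u⁻¹ : oˣ) : o) : F) = 1 := by
    have h2 := u.mul_inv
    rw [hu] at h2
    have h3 := congrArg (fun z : o => (z : F)) h2
    simpa using h3
  have hne : x ≠ 0 := left_ne_zero_of_mul_eq_one h1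
  have h4 : x⁻¹ = (((u⁻¹ : oˣ) : o) : F) := inv_eq_of_mul_eq_one_right h1
  exact ⟨h4 ▸ ((u⁻¹ : oˣ) : o).2, hne⟩

lemma isUnit_of_ou {x : F} (hx : x ∈ o) (hxi : x⁻¹ ∈ o) (hne : x ≠ 0) :
    IsUnit (⟨x, hx⟩ : o) := by
  refine IsUnit.of_mul_eq_one (a := (⟨x, hx⟩ : o)) ⟨x⁻¹, hxi⟩ ?_
  ext
  exact mul_inv_cancel₀ hne

lemma unit_add_pm {ϖ x m : F} (hϖo : ϖ ∈ o) (hϖnu : ¬ IsUnit (⟨ϖ, hϖo⟩ : o))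
    (hx : x ∈ o) (hxi : x⁻¹ ∈ o) (hne : x ≠ 0) (hm : m ∈ o) :
    (x + ϖ * m)⁻¹ ∈ o ∧ x + ϖ * m ≠ 0 := by
  have hsum : x + ϖ * m ∈ o := add_mem hx (mul_mem hϖo hm)
  refine ou_of_isUnit hsum ?_
  by_contra hns
  have h1 : (⟨x + ϖ * m, hsum⟩ : o) ∈ nonunits o := hns
  have h2 : (-(⟨ϖ, hϖo⟩ * ⟨m, hm⟩) : o) ∈ nonunits o := by
    rw [mem_nonunits_iff, IsUnit.neg_iff]
    exact fun h => hϖnu (isUnit_of_mul_isUnit_left h)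
  have h3 := IsLocalRing.nonunits_add h1 h2
  have : (⟨x + ϖ * m, hsum⟩ : o) + -(⟨ϖ, hϖo⟩ * ⟨m, hm⟩) = ⟨x, hx⟩ := by
    ext; simp
  rw [this] at h3
  exact h3 (isUnit_of_ou hx hxi hne)

lemma unit_of_mul_unit {x y : F} (hy : y ∈ o) (hi : (x * y)⁻¹ ∈ o) (hne : x * y ≠ 0) :
    x⁻¹ ∈ o ∧ x ≠ 0 := by
  have hxne : x ≠ 0 := left_ne_zero_of_mul hne
  have hyne : y ≠ 0 := right_ne_zero_of_mul hne
  have : x⁻¹ = y * (x * y)⁻¹ := by field_simp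
  rw [this]
  exact ⟨mul_mem hy hi, hxne⟩

lemma aM_mul_inv {x : F} (hne : x ≠ 0) : aM x * aM x⁻¹ = 1 ∧ aM x⁻¹ * aM x = 1 := by
  unfold aM
  rw [Matrix.mul_fin_two, Matrix.mul_fin_two, Matrix.one_fin_two]
  norm_num [mul_inv_cancel₀ hne, inv_mul_cancel₀ hne]

end S14

/-- For a quadratic field extension `E/F` and integers `r ≥ 1`,
`c ≥ 1`: `K₀(𝔭^c)·ι_r(𝒪_r^×) = ⨆_{u ∈ 𝔬/𝔭^c} K₀(𝔭^c)·n₋(u)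
= {[[c₁,c₂],[c₃,c₄]] ∈ GL₂(𝔬) : c₄ ∈ 𝔬^×}`; in particular this set is independent of
`c ≥ 1`. -/
theorem stmt_14 {F E : Type*} [Field F] [Field E] [Algebra F E]
    (o : ValuationSubring F) [IsDiscreteValuationRing o]
    (O : ValuationSubring E) [IsDiscreteValuationRing O]
    (hcomp : ∀ x : F, x ∈ o ↔ algebraMap F E x ∈ O)
    (ϖ : F) (hϖo : ϖ ∈ o) (hϖ : Irreducible (⟨ϖ, hϖo⟩ : o))
    (β : E) (hβO : β ∈ O) (hβno : ¬ ∃ x ∈ o, β = algebraMap F E x)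
    (hOgen : ∀ z ∈ O, ∃ x y : F, x ∈ o ∧ y ∈ o ∧
      z = algebraMap F E x + algebraMap F E y * β)
    (hquad : ∀ z : E, ∃ s t : F, z = algebraMap F E s + algebraMap F E t * β)
    (a b : F) (hao : a ∈ o) (hbo : b ∈ o) (hau : a⁻¹ ∈ o) (hane : a ≠ 0)
    (hmin : β ^ 2 - algebraMap F E b * β + algebraMap F E a = 0)
    (ι₀ : E →+* Matrix (Fin 2) (Fin 2) F)
    (hι₀ : ∀ x : E, ∀ j : Fin 2,
      x * (![β, 1] j) = ∑ i : Fin 2, (![β, 1] i) * algebraMap F E (ι₀ x i j))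
    (r c : ℕ) (hr : 1 ≤ r) (hc : 1 ≤ c) :
    ({g | ∃ k ∈ K0 o ϖ c, ∃ t ∈ OrEx o ϖ β r,
        g = k * (aM (ϖ ^ r) * ι₀ t * aM ((ϖ ^ r)⁻¹))} :
        Set (Matrix (Fin 2) (Fin 2) F)) =
      {g | g ∈ GLo o ∧ (g 1 1)⁻¹ ∈ o ∧ g 1 1 ≠ 0} ∧
    (∀ g : Matrix (Fin 2) (Fin 2) F,
      (∃ k ∈ K0 o ϖ c, ∃ t ∈ OrEx o ϖ β r,
        g = k * (aM (ϖ ^ r) * ι₀ t * aM ((ϖ ^ r)⁻¹))) ↔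
      ∃ u ∈ o, ∃ k ∈ K0 o ϖ c, g = k * nmM u) ∧
    (∀ u₁ ∈ o, ∀ u₂ ∈ o,
      ((∃ d ∈ o, u₁ - u₂ = ϖ ^ c * d) →
        {g | ∃ k ∈ K0 o ϖ c, g = k * nmM u₁} =
          {g | ∃ k ∈ K0 o ϖ c, g = k * nmM u₂}) ∧
      (¬ (∃ d ∈ o, u₁ - u₂ = ϖ ^ c * d) →
        Disjoint {g : Matrix (Fin 2) (Fin 2) F | ∃ k ∈ K0 o ϖ c, g = k * nmM u₁}
          {g | ∃ k ∈ K0 o ϖ c, g = k * nmM u₂})) := by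
  obtain ⟨r', rfl⟩ : ∃ r'', r = r'' + 1 := ⟨r - 1, by omega⟩
  obtain ⟨c', rfl⟩ : ∃ c'', c = c'' + 1 := ⟨c - 1, by omega⟩
  set r := r' + 1
  set c := c' + 1
  have hϖF : ϖ ≠ 0 := fun h => hϖ.ne_zero (Subtype.ext h)
  have hϖnu : ¬ IsUnit (⟨ϖ, hϖo⟩ : o) := hϖ.not_isUnit
  have halg : Function.Injective (algebraMap F E) := (algebraMap F E).injective
  -- uniqueness of representation in the basis (1, β)
  have hrep : ∀ s t s' t' : F,
      algebraMap F E s + algebraMap F E t * β =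
        algebraMap F E s' + algebraMap F E t' * β → s = s' ∧ t = t' := by
    intro s t s' t' h
    by_cases ht : t = t'
    · subst ht
      exact ⟨halg (add_right_cancel h), rfl⟩
    · exfalso
      apply hβno
      have htne : algebraMap F E (t' - t) ≠ 0 := by
        rw [map_sub, sub_ne_zero]
        exact fun hh => ht (halg hh).symm
      have hβeq : β = algebraMap F E ((s - s') / (t' - t)) := by
        rw [map_div₀, eq_div_iff htne, map_sub, map_sub]
        linear_combination -h
      exact ⟨(s - s') / (t' - t), (hcomp _).mpr (hβeq ▸ hβO), hβeq⟩
  have hb2 : β ^ 2 = algebraMap F E b * β - algebraMap F E a := by linear_combination hmin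
  have hι : ∀ (z : E) (s t : F), z = algebraMap F E s + algebraMap F E t * β →
      ι₀ z = !![s + t * b, t; -(t * a), s] := by
    intro z s t hz
    have h1 := hι₀ z 1
    have h0 := hι₀ z 0
    simp only [Matrix.cons_val_one, Matrix.head_cons, Matrix.cons_val_zero, Fin.sum_univ_two,
      mul_one, one_mul] at h1 h0
    have e1 : algebraMap F E s + algebraMap F E t * β =
        algebraMap F E (ι₀ z 1 1) + algebraMap F E (ι₀ z 0 1) * β := by
      linear_combination h1 - hz
    obtain ⟨es, et⟩ := hrep _ _ _ _ e1
    have e0 : algebraMap F E (-(t * a)) + algebraMap F E (s + t * b) * β =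
        algebraMap F E (ι₀ z 1 0) + algebraMap F E (ι₀ z 0 0) * β := by
      simp only [map_neg, map_mul, map_add]
      linear_combination h0 - β * hz - algebraMap F E t * hmin
    obtain ⟨es0, et0⟩ := hrep _ _ _ _ e0
    rw [Matrix.eta_fin_two (ι₀ z), ← es, ← et, ← es0, ← et0]
  have hιr : ∀ (z : E) (s y : F), z = algebraMap F E s + algebraMap F E (ϖ ^ r * y) * β →
      aM (ϖ ^ r) * ι₀ z * aM ((ϖ ^ r)⁻¹) =
        !![s + ϖ ^ r * y * b, ϖ ^ r * (ϖ ^ r * y); -(y * a), s] := by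
    intro z s y hz
    rw [hι z s (ϖ ^ r * y) hz]
    have hp : (ϖ : F) ^ r ≠ 0 := pow_ne_zero _ hϖF
    unfold aM
    rw [Matrix.mul_fin_two, Matrix.mul_fin_two]
    ext i j
    fin_cases i <;> fin_cases j <;> simp <;> field_simp
  have hform_mem : ∀ s y : F, s ∈ o → y ∈ o → ∀ i j,
      (!![s + ϖ ^ r * y * b, ϖ ^ r * (ϖ ^ r * y); -(y * a), s] :
        Matrix (Fin 2) (Fin 2) F) i j ∈ o := by
    intro s y hs hy i j
    fin_cases i <;> fin_cases j <;> simp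
    · exact add_mem hs (mul_mem (mul_mem (pow_mem hϖo r) hy) hbo)
    · exact mul_mem (pow_mem hϖo r) (mul_mem (pow_mem hϖo r) hy)
    · exact mul_mem hy hao
    · exact hs
  have hK0diag : ∀ k ∈ K0 o ϖ c, (k 1 1)⁻¹ ∈ o ∧ k 1 1 ≠ 0 := by
    intro k hk
    obtain ⟨hkG, d, hdo, hd⟩ := hk
    obtain ⟨hdet, hdeti, hdetne⟩ := S14.GLo_det hkG
    have hcomb : k 1 1 * k 0 0 = k.det + ϖ * (ϖ ^ c' * (k 0 1 * d)) := by
      rw [Matrix.det_fin_two, hd]; ring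
    have h1 := S14.unit_add_pm hϖo hϖnu hdet hdeti hdetne
      (mul_mem (pow_mem hϖo c') (mul_mem (hkG.1 0 1) hdo))
    rw [← hcomb] at h1
    exact S14.unit_of_mul_unit (hkG.1 0 0) h1.1 h1.2
  have hMfact : ∀ t ∈ OrEx o ϖ β r, ∃ s y : F, s ∈ o ∧ y ∈ o ∧ s⁻¹ ∈ o ∧ s ≠ 0 ∧
      aM (ϖ ^ r) * ι₀ t * aM ((ϖ ^ r)⁻¹) =
        !![s + ϖ ^ r * y * b, ϖ ^ r * (ϖ ^ r * y); -(y * a), s] ∧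
      aM (ϖ ^ r) * ι₀ t * aM ((ϖ ^ r)⁻¹) ∈ GLo o := by
    intro t ht
    obtain ⟨⟨s, y, hs, hy, hts⟩, w, ⟨s2, y2, hs2, hy2, hws⟩, htw⟩ := ht
    have hMeq := hιr t s y hts
    have hNeq := hιr w s2 y2 hws
    have hMent : ∀ i j, (aM (ϖ ^ r) * ι₀ t * aM ((ϖ ^ r)⁻¹)) i j ∈ o := by
      rw [hMeq]; exact hform_mem s y hs hy
    have hNent : ∀ i j, (aM (ϖ ^ r) * ι₀ w * aM ((ϖ ^ r)⁻¹)) i j ∈ o := by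
      rw [hNeq]; exact hform_mem s2 y2 hs2 hy2
    have haa := S14.aM_mul_inv (pow_ne_zero r hϖF)
    have hcm : ∀ P Q : Matrix (Fin 2) (Fin 2) F,
        (aM (ϖ ^ r) * P * aM ((ϖ ^ r)⁻¹)) * (aM (ϖ ^ r) * Q * aM ((ϖ ^ r)⁻¹)) =
          aM (ϖ ^ r) * (P * Q) * aM ((ϖ ^ r)⁻¹) := by
      intro P Q
      simp only [mul_assoc]
      rw [← mul_assoc (aM ((ϖ ^ r)⁻¹)) (aM (ϖ ^ r)), haa.2, one_mul]
    have hprod1 : ι₀ t * ι₀ w = 1 := by rw [← map_mul, htw, map_one]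
    have hprod2 : ι₀ w * ι₀ t = 1 := by rw [← map_mul, mul_comm w t, htw, map_one]
    have hMN : (aM (ϖ ^ r) * ι₀ t * aM ((ϖ ^ r)⁻¹)) *
        (aM (ϖ ^ r) * ι₀ w * aM ((ϖ ^ r)⁻¹)) = 1 := by
      rw [hcm, hprod1, mul_one, haa.1]
    have hNM : (aM (ϖ ^ r) * ι₀ w * aM ((ϖ ^ r)⁻¹)) *
        (aM (ϖ ^ r) * ι₀ t * aM ((ϖ ^ r)⁻¹)) = 1 := by
      rw [hcm, hprod2, mul_one, haa.1]
    have hMG : aM (ϖ ^ r) * ι₀ t * aM ((ϖ ^ r)⁻¹) ∈ GLo o :=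
      ⟨hMent, aM (ϖ ^ r) * ι₀ w * aM ((ϖ ^ r)⁻¹), hNent, hMN, hNM⟩
    obtain ⟨hdet, hdeti, hdetne⟩ := S14.GLo_det hMG
    have hcomb : s * (s + ϖ ^ r * y * b) =
        (aM (ϖ ^ r) * ι₀ t * aM ((ϖ ^ r)⁻¹)).det +
          ϖ * (-(ϖ ^ r' * (ϖ ^ r * (y * (y * a))))) := by
      rw [hMeq, Matrix.det_fin_two_of]
      show s * (s + ϖ ^ (r' + 1) * y * b) = _ + ϖ * (-(ϖ ^ r' * (ϖ ^ (r' + 1) * (y * (y * a)))))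
      ring
    have h1 := S14.unit_add_pm hϖo hϖnu hdet hdeti hdetne
      (neg_mem (mul_mem (pow_mem hϖo r')
        (mul_mem (pow_mem hϖo r) (mul_mem hy (mul_mem hy hao)))))
    rw [← hcomb] at h1
    obtain ⟨hsi, hsne⟩ := S14.unit_of_mul_unit
      (add_mem hs (mul_mem (mul_mem (pow_mem hϖo r) hy) hbo)) h1.1 h1.2
    exact ⟨s, y, hs, hy, hsi, hsne, hMeq, hMG⟩
  have hnm_decomp : ∀ g ∈ GLo o, (g 1 1)⁻¹ ∈ o → g 1 1 ≠ 0 →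
      ∃ u ∈ o, ∃ k ∈ K0 o ϖ c, g = k * nmM u := by
    intro g hgG hgi hgne
    have huo : g 1 0 * (g 1 1)⁻¹ ∈ o := mul_mem (hgG.1 1 0) hgi
    refine ⟨g 1 0 * (g 1 1)⁻¹, huo, g * nmM (-(g 1 0 * (g 1 1)⁻¹)),
      ⟨S14.GLo_mul hgG (S14.nmM_GLo (neg_mem huo)), 0, zero_mem o, ?_⟩, ?_⟩
    · rw [Matrix.mul_apply, Fin.sum_univ_two, S14.nmM_00, S14.nmM_entry]
      field_simp
      ring
    · rw [mul_assoc, S14.nmM_mul, neg_add_cancel, S14.nmM_zero, mul_one]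
  have hmain1 : ∀ g : Matrix (Fin 2) (Fin 2) F,
      (∃ k ∈ K0 o ϖ c, ∃ t ∈ OrEx o ϖ β r,
        g = k * (aM (ϖ ^ r) * ι₀ t * aM ((ϖ ^ r)⁻¹))) →
      ∃ u ∈ o, ∃ k ∈ K0 o ϖ c, g = k * nmM u := by
    rintro g ⟨k, hk, t, ht, rfl⟩
    obtain ⟨s, y, hs, hy, hsi, hsne, hMeq, hMG⟩ := hMfact t ht
    have hgG := S14.GLo_mul hk.1 hMG
    obtain ⟨hk11i, hk11ne⟩ := hK0diag k hk
    obtain ⟨hkG, d, hdo, hd⟩ := hk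
    have h11 : (k * (aM (ϖ ^ r) * ι₀ t * aM ((ϖ ^ r)⁻¹))) 1 1 =
        k 1 1 * s + ϖ * (ϖ ^ c' * (d * (ϖ ^ r * (ϖ ^ r * y)))) := by
      rw [Matrix.mul_apply, Fin.sum_univ_two, hMeq, hd]
      show ϖ ^ (c' + 1) * d * _ + _ = _ + ϖ * (ϖ ^ c' * _)
      simp only [Matrix.cons_val_one, Matrix.cons_val_zero, Matrix.head_cons, Matrix.cons_val',
        Matrix.empty_val', Matrix.cons_val_fin_one, Matrix.head_fin_const, Matrix.of_apply]
      ring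
    have hx : (k 1 1 * s)⁻¹ ∈ o := by rw [mul_inv]; exact mul_mem hk11i hsi
    have h2 := S14.unit_add_pm hϖo hϖnu (mul_mem (hkG.1 1 1) hs) hx
      (mul_ne_zero hk11ne hsne)
      (mul_mem (pow_mem hϖo c') (mul_mem hdo
        (mul_mem (pow_mem hϖo r) (mul_mem (pow_mem hϖo r) hy))))
    rw [← h11] at h2
    exact hnm_decomp _ hgG h2.1 h2.2
  have hmain2 : ∀ u ∈ o, ∀ k ∈ K0 o ϖ c, ∃ k2 ∈ K0 o ϖ c, ∃ t ∈ OrEx o ϖ β r,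
      k * nmM u = k2 * (aM (ϖ ^ r) * ι₀ t * aM ((ϖ ^ r)⁻¹)) := by
    intro u hu k hk
    set Nr := a * a - a * (ϖ ^ r * u * b) + ϖ ^ r * (ϖ ^ r * (u * u * a)) with hNrdef
    have hNrmem : -(ϖ ^ r' * (u * b)) + ϖ ^ r' * (ϖ ^ r * (u * u)) ∈ o :=
      add_mem (neg_mem (mul_mem (pow_mem hϖo r') (mul_mem hu hbo)))
        (mul_mem (pow_mem hϖo r') (mul_mem (pow_mem hϖo r) (mul_mem hu hu)))
    have hNr1 := S14.unit_add_pm hϖo hϖnu hao hau hane hNrmem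
    have hNreq : Nr = a * (a + ϖ * (-(ϖ ^ r' * (u * b)) + ϖ ^ r' * (ϖ ^ r * (u * u)))) := by
      rw [hNrdef]
      show _ - _ * (ϖ ^ (r' + 1) * u * b) + ϖ ^ (r' + 1) * (ϖ ^ (r' + 1) * _) =
        a * (a + ϖ * (_ + ϖ ^ r' * (ϖ ^ (r' + 1) * _)))
      ring
    have hNri : Nr⁻¹ ∈ o := by rw [hNreq, mul_inv]; exact mul_mem hau hNr1.1
    have hNrne : Nr ≠ 0 := by rw [hNreq]; exact mul_ne_zero hane hNr1.2
    set t := algebraMap F E a + algebraMap F E (ϖ ^ r * (-u)) * β with htdef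
    set w := algebraMap F E (Nr⁻¹ * (a - ϖ ^ r * u * b)) +
      algebraMap F E (ϖ ^ r * (Nr⁻¹ * u)) * β with hwdef
    have httb : t * (algebraMap F E (a - ϖ ^ r * u * b) + algebraMap F E (ϖ ^ r * u) * β) =
        algebraMap F E Nr := by
      rw [htdef, hNrdef]
      simp only [map_mul, map_add, map_sub, map_neg, map_pow]
      linear_combination (-(algebraMap F E ϖ ^ r * algebraMap F E u *
        (algebraMap F E ϖ ^ r * algebraMap F E u))) * hmin
    have hw2 : w = algebraMap F E Nr⁻¹ *
        (algebraMap F E (a - ϖ ^ r * u * b) + algebraMap F E (ϖ ^ r * u) * β) := by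
      rw [hwdef]
      simp only [map_mul, map_inv₀]
      ring
    have httw : t * w = 1 := by
      have : t * w = algebraMap F E Nr⁻¹ * algebraMap F E Nr := by
        rw [hw2, ← httb]; ring
      rw [this, map_inv₀, inv_mul_cancel₀ (fun hh => hNrne (halg (by rw [hh, map_zero])))]
    have htOr : t ∈ OrEx o ϖ β r :=
      ⟨⟨a, -u, hao, neg_mem hu, htdef⟩, w,
        ⟨Nr⁻¹ * (a - ϖ ^ r * u * b), Nr⁻¹ * u,
          mul_mem hNri (sub_mem hao (mul_mem (mul_mem (pow_mem hϖo r) hu) hbo)),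
          mul_mem hNri hu, hwdef⟩, httw⟩
    obtain ⟨s0, y0, _, _, _, _, _, hMG⟩ := hMfact t htOr
    have hMeq := hιr t a (-u) htdef
    have hk2K : (aM (ϖ ^ r) * ι₀ t * aM ((ϖ ^ r)⁻¹)) * nmM (-u) ∈ K0 o ϖ c := by
      refine ⟨S14.GLo_mul hMG (S14.nmM_GLo (neg_mem hu)), 0, zero_mem o, ?_⟩
      rw [Matrix.mul_apply, Fin.sum_univ_two, S14.nmM_00, S14.nmM_entry, hMeq]
      simp only [Matrix.cons_val_one, Matrix.cons_val_zero, Matrix.head_cons, Matrix.cons_val',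
        Matrix.empty_val', Matrix.cons_val_fin_one, Matrix.head_fin_const, Matrix.of_apply]
      ring
    have hM_eq_k : aM (ϖ ^ r) * ι₀ t * aM ((ϖ ^ r)⁻¹) =
        ((aM (ϖ ^ r) * ι₀ t * aM ((ϖ ^ r)⁻¹)) * nmM (-u)) * nmM u := by
      rw [mul_assoc (aM (ϖ ^ r) * ι₀ t * aM ((ϖ ^ r)⁻¹)) (nmM (-u)) (nmM u),
        S14.nmM_mul, neg_add_cancel, S14.nmM_zero, mul_one]
    obtain ⟨ki, hki, h1, h2⟩ := S14.K0_inv hk2K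
    refine ⟨k * ki, S14.K0_mul hk hki, t, htOr, ?_⟩
    calc k * nmM u
        = k * (ki * ((aM (ϖ ^ r) * ι₀ t * aM ((ϖ ^ r)⁻¹)) * nmM (-u)) * nmM u) := by
          rw [h2, one_mul]
      _ = k * (ki * (((aM (ϖ ^ r) * ι₀ t * aM ((ϖ ^ r)⁻¹)) * nmM (-u)) * nmM u)) := by
          rw [mul_assoc ki]
      _ = k * (ki * (aM (ϖ ^ r) * ι₀ t * aM ((ϖ ^ r)⁻¹))) := by rw [← hM_eq_k]
      _ = (k * ki) * (aM (ϖ ^ r) * ι₀ t * aM ((ϖ ^ r)⁻¹)) := by rw [← mul_assoc]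
  refine ⟨?_, ?_, ?_⟩
  · ext g
    simp only [Set.mem_setOf_eq]
    constructor
    · intro h
      obtain ⟨u, hu, k, hk, rfl⟩ := hmain1 g h
      have hgG := S14.GLo_mul hk.1 (S14.nmM_GLo hu)
      have h11 : (k * nmM u) 1 1 = k 1 1 := by
        rw [Matrix.mul_apply, Fin.sum_univ_two, S14.nmM_01, S14.nmM_11]; ring
      obtain ⟨hki, hkne⟩ := hK0diag k hk
      exact ⟨hgG, by rw [h11]; exact hki, by rw [h11]; exact hkne⟩
    · rintro ⟨hgG, hgi, hgne⟩
      obtain ⟨u, hu, k, hk, rfl⟩ := hnm_decomp g hgG hgi hgne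
      obtain ⟨k2, hk2, t, ht, heq⟩ := hmain2 u hu k hk
      exact ⟨k2, hk2, t, ht, heq⟩
  · intro g
    constructor
    · exact hmain1 g
    · rintro ⟨u, hu, k, hk, rfl⟩
      obtain ⟨k2, hk2, t, ht, heq⟩ := hmain2 u hu k hk
      exact ⟨k2, hk2, t, ht, heq⟩
  · intro u₁ hu₁ u₂ hu₂
    constructor
    · rintro ⟨d, hdo, hdiff⟩
      ext g
      simp only [Set.mem_setOf_eq]
      constructor
      · rintro ⟨k, hk, rfl⟩
        refine ⟨k * nmM (u₁ - u₂),
          S14.K0_mul hk (S14.nmM_K0 (sub_mem hu₁ hu₂) ⟨d, hdo, hdiff⟩), ?_⟩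
        rw [mul_assoc, S14.nmM_mul, sub_add_cancel]
      · rintro ⟨k, hk, rfl⟩
        refine ⟨k * nmM (u₂ - u₁),
          S14.K0_mul hk (S14.nmM_K0 (sub_mem hu₂ hu₁)
            ⟨-d, neg_mem hdo, by linear_combination -hdiff⟩), ?_⟩
        rw [mul_assoc, S14.nmM_mul, sub_add_cancel]
    · intro hcon
      rw [Set.disjoint_left]
      rintro g ⟨k₁, hk₁, rfl⟩ ⟨k₂, hk₂, hg₂⟩
      obtain ⟨ki, hki, h1, h2⟩ := S14.K0_inv hk₂
      have e1 : ki * k₁ * nmM u₁ = nmM u₂ := by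
        rw [mul_assoc, hg₂, ← mul_assoc, h2, one_mul]
      have e2 : ki * k₁ = nmM (u₂ - u₁) := by
        calc ki * k₁ = ki * k₁ * (nmM u₁ * nmM (-u₁)) := by
              rw [S14.nmM_mul, add_neg_cancel, S14.nmM_zero, mul_one]
          _ = (ki * k₁ * nmM u₁) * nmM (-u₁) := by rw [mul_assoc (ki * k₁)]
          _ = nmM u₂ * nmM (-u₁) := by rw [e1]
          _ = nmM (u₂ - u₁) := by rw [S14.nmM_mul, sub_eq_add_neg]
      have e3 := (S14.K0_mul hki hk₁).2
      rw [e2] at e3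
      obtain ⟨d, hdo, hd⟩ := e3
      rw [S14.nmM_entry] at hd
      exact hcon ⟨-d, neg_mem hdo, by linear_combination -hd⟩
end

section
/- Let E/F be a quadratic field extension, z ∈ 𝔬^×, and s, r ∈ ℕ. Then a(zϖ^s)·ι₀(E)·a(ϖ^r)^{−1} ∩ M₂(𝔬) = a(zϖ^s)·ι₀(ϖ^{r−s}𝒪_s)·a(ϖ^r)^{−1} if r ≥ s, and a(zϖ^s)·ι₀(E)·a(ϖ^r)^{−1} ∩ M₂(𝔬) = a(zϖ^s)·ι₀(𝒪_r)·a(ϖ^r)^{−1} if r < s. -/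
/-- `M₂(𝔬)`: matrices with entries in `𝔬`. -/
def Mo {F : Type*} [Field F] (o : ValuationSubring F) :
    Set (Matrix (Fin 2) (Fin 2) F) :=
  {g | ∀ i j, g i j ∈ o}

/-- Let `z ∈ 𝔬^×` and `s, r ∈ ℕ`.  Then
`a(zϖ^s)·ι₀(E)·a(ϖ^r)^{−1} ∩ M₂(𝔬) = a(zϖ^s)·ι₀(ϖ^{r−s}𝒪_s)·a(ϖ^r)^{−1}` if
`r ≥ s`, and `a(zϖ^s)·ι₀(E)·a(ϖ^r)^{−1} ∩ M₂(𝔬) = a(zϖ^s)·ι₀(𝒪_r)·a(ϖ^r)^{−1}`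
if `r < s`. -/
theorem stmt_16 {F E : Type*} [Field F] [Field E] [Algebra F E]
    (o : ValuationSubring F) [IsDiscreteValuationRing o]
    (O : ValuationSubring E) [IsDiscreteValuationRing O]
    (hcomp : ∀ x : F, x ∈ o ↔ algebraMap F E x ∈ O)
    (ϖ : F) (hϖo : ϖ ∈ o) (hϖ : Irreducible (⟨ϖ, hϖo⟩ : o))
    (β : E) (hβO : β ∈ O) (hβno : ¬ ∃ x ∈ o, β = algebraMap F E x)
    (hOgen : ∀ w ∈ O, ∃ x y : F, x ∈ o ∧ y ∈ o ∧
      w = algebraMap F E x + algebraMap F E y * β)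
    (hquad : ∀ w : E, ∃ x y : F, w = algebraMap F E x + algebraMap F E y * β)
    (a b : F) (hao : a ∈ o) (hbo : b ∈ o) (hau : a⁻¹ ∈ o) (hane : a ≠ 0)
    (hmin : β ^ 2 - algebraMap F E b * β + algebraMap F E a = 0)
    (ι₀ : E →+* Matrix (Fin 2) (Fin 2) F)
    (hι₀ : ∀ x : E, ∀ j : Fin 2,
      x * (![β, 1] j) = ∑ i : Fin 2, (![β, 1] i) * algebraMap F E (ι₀ x i j))
    (z : F) (hz : z ∈ o) (hzinv : z⁻¹ ∈ o) (hzne : z ≠ 0) (s r : ℕ) :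
    (s ≤ r →
      {m : Matrix (Fin 2) (Fin 2) F | ∃ t : E,
          m = aM (z * ϖ ^ s) * ι₀ t * aM ((ϖ ^ r)⁻¹)} ∩ Mo o =
        {m | ∃ t ∈ OrE o ϖ β s,
          m = aM (z * ϖ ^ s) * ι₀ (algebraMap F E (ϖ ^ (r - s)) * t) *
            aM ((ϖ ^ r)⁻¹)}) ∧
    (r < s →
      {m : Matrix (Fin 2) (Fin 2) F | ∃ t : E,
          m = aM (z * ϖ ^ s) * ι₀ t * aM ((ϖ ^ r)⁻¹)} ∩ Mo o =
        {m | ∃ t ∈ OrE o ϖ β r,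
          m = aM (z * ϖ ^ s) * ι₀ t * aM ((ϖ ^ r)⁻¹)}) := by
    -- basic facts
  have hinj : Function.Injective (algebraMap F E) := (algebraMap F E).injective
  have hϖne : ϖ ≠ 0 := fun h => hϖ.ne_zero (Subtype.ext h)
  have hϖrne : (ϖ : F) ^ r ≠ 0 := pow_ne_zero _ hϖne
  have hzero : ∀ p q : F, algebraMap F E p + algebraMap F E q * β = 0 → p = 0 ∧ q = 0 := by
    intro p q h
    by_cases hq : q = 0
    · subst hq
      simp only [map_zero, zero_mul, add_zero] at h
      exact ⟨hinj (by simpa using h), rfl⟩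
    · exfalso
      have hq' : algebraMap F E q ≠ 0 := fun h' => hq (hinj (by simpa using h'))
      have hβ : β = algebraMap F E (-(p / q)) := by
        rw [map_neg, map_div₀, neg_div', eq_div_iff hq']
        linear_combination h
      exact hβno ⟨-(p / q), (hcomp _).2 (hβ ▸ hβO), hβ⟩
  have huniq : ∀ u v u' v' : F,
      algebraMap F E u + algebraMap F E v * β = algebraMap F E u' + algebraMap F E v' * β →
      u = u' ∧ v = v' := by
    intro u v u' v' h
    have h' : algebraMap F E (u - u') + algebraMap F E (v - v') * β = 0 := by
      rw [map_sub, map_sub]; linear_combination h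
    obtain ⟨h1, h2⟩ := hzero _ _ h'
    exact ⟨sub_eq_zero.mp h1, sub_eq_zero.mp h2⟩
  have hrep : ∀ (t : E) (u v : F), t = algebraMap F E u + algebraMap F E v * β →
      ι₀ t = !![u + v * b, v; -(v * a), u] := by
    intro t u v ht
    have h0 := hι₀ t 0
    have h1 := hι₀ t 1
    simp only [Fin.sum_univ_two, Matrix.cons_val_zero, Matrix.cons_val_one, Matrix.head_cons,
      mul_one, one_mul] at h0 h1
    have e1 : algebraMap F E u + algebraMap F E v * β
        = algebraMap F E (ι₀ t 1 1) + algebraMap F E (ι₀ t 0 1) * β := by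
      linear_combination h1 - ht
    have e0 : algebraMap F E (-(v * a)) + algebraMap F E (u + v * b) * β
        = algebraMap F E (ι₀ t 1 0) + algebraMap F E (ι₀ t 0 0) * β := by
      rw [map_neg, map_mul, map_add, map_mul]
      linear_combination h0 - β * ht - algebraMap F E v * hmin
    obtain ⟨hu, hv⟩ := huniq _ _ _ _ e1
    obtain ⟨h10, h00⟩ := huniq _ _ _ _ e0
    ext i j
    fin_cases i <;> fin_cases j <;> simp [← hu, ← hv, ← h10, ← h00]
  have hAM : ∀ (A : Matrix (Fin 2) (Fin 2) F) (c d : F),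
      aM c * A * aM d = !![c * A 0 0 * d, c * A 0 1; A 1 0 * d, A 1 1] := by
    intro A c d
    ext i j
    fin_cases i <;> fin_cases j <;>
      simp [aM, Matrix.mul_apply, Matrix.vecMul, Matrix.vecHead, Matrix.vecTail,
        Fin.sum_univ_two, dotProduct]
  constructor
  · -- case s ≤ r
    intro hsr
    have hrs : (ϖ : F) ^ r = ϖ ^ (r - s) * ϖ ^ s := by
      rw [← pow_add]; congr 1; omega
    ext m
    constructor
    · rintro ⟨⟨t, hmt⟩, hmo⟩
      obtain ⟨u, v, ht⟩ := hquad t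
      have hmt' : m = !![z * ϖ ^ s * (u + v * b) * (ϖ ^ r)⁻¹, z * ϖ ^ s * v;
          -(v * a) * (ϖ ^ r)⁻¹, u] := by
        rw [hmt, hrep t u v ht, hAM]; norm_num
      have e00 : z * ϖ ^ s * (u + v * b) * (ϖ ^ r)⁻¹ ∈ o := by
        have := hmo 0 0; rw [hmt'] at this; simpa using this
      have e10 : -(v * a) * (ϖ ^ r)⁻¹ ∈ o := by
        have := hmo 1 0; rw [hmt'] at this; simpa using this
      have e11 : u ∈ o := by
        have := hmo 1 1; rw [hmt'] at this; simpa using this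
      have hy : v * (ϖ ^ r)⁻¹ ∈ o := by
        have hE : v * (ϖ ^ r)⁻¹ = -(-(v * a) * (ϖ ^ r)⁻¹ * a⁻¹) := by
          field_simp
        rw [hE]; exact neg_mem (mul_mem e10 hau)
      have hx : u * (ϖ ^ (r - s))⁻¹ ∈ o := by
        have hE : u * (ϖ ^ (r - s))⁻¹
            = z⁻¹ * (z * ϖ ^ s * (u + v * b) * (ϖ ^ r)⁻¹) - ϖ ^ s * b * (v * (ϖ ^ r)⁻¹) := by
          rw [hrs]
          have h1 : (ϖ : F) ^ (r - s) ≠ 0 := pow_ne_zero _ hϖne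
          have h2 : (ϖ : F) ^ s ≠ 0 := pow_ne_zero _ hϖne
          field_simp
          ring
        rw [hE]
        exact sub_mem (mul_mem hzinv e00) (mul_mem (mul_mem (pow_mem hϖo s) hbo) hy)
      refine ⟨algebraMap F E (u * (ϖ ^ (r - s))⁻¹)
          + algebraMap F E (ϖ ^ s * (v * (ϖ ^ r)⁻¹)) * β,
        ⟨_, _, hx, hy, rfl⟩, ?_⟩
      have htt : algebraMap F E (ϖ ^ (r - s)) *
          (algebraMap F E (u * (ϖ ^ (r - s))⁻¹)
            + algebraMap F E (ϖ ^ s * (v * (ϖ ^ r)⁻¹)) * β) = t := by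
        rw [ht]
        have hu : (ϖ : F) ^ (r - s) * (u * (ϖ ^ (r - s))⁻¹) = u := by
          field_simp
        have hv : (ϖ : F) ^ (r - s) * (ϖ ^ s * (v * (ϖ ^ r)⁻¹)) = v := by
          rw [hrs]; field_simp
        rw [mul_add, ← map_mul, hu, ← mul_assoc, ← map_mul, hv]
      rw [htt]; exact hmt
    · rintro ⟨t', ⟨x, y, hx, hy, ht'⟩, hmt⟩
      have ht : algebraMap F E (ϖ ^ (r - s)) * t'
          = algebraMap F E (ϖ ^ (r - s) * x) + algebraMap F E (ϖ ^ r * y) * β := by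
        rw [ht', hrs, map_mul, map_mul, map_mul, map_mul]
        ring
      refine ⟨⟨_, hmt⟩, ?_⟩
      intro i j
      rw [hmt, hrep _ _ _ ht, hAM]
      fin_cases i <;> fin_cases j <;> simp only [Matrix.cons_val', Matrix.cons_val_zero,
        Matrix.cons_val_one, Matrix.head_cons, Matrix.empty_val', Matrix.cons_val_fin_one,
        Matrix.head_fin_const, Fin.isValue, Matrix.of_apply, Fin.mk_zero, Fin.mk_one]
      · have hE : z * ϖ ^ s * (ϖ ^ (r - s) * x + ϖ ^ r * y * b) * (ϖ ^ r)⁻¹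
            = z * (x + ϖ ^ s * y * b) := by
          rw [hrs]; field_simp
        rw [hE]
        exact mul_mem hz (add_mem hx (mul_mem (mul_mem (pow_mem hϖo s) hy) hbo))
      · exact mul_mem (mul_mem hz (pow_mem hϖo s)) (mul_mem (pow_mem hϖo r) hy)
      · have hE : -(ϖ ^ r * y * a) * (ϖ ^ r)⁻¹ = -(y * a) := by
          field_simp
        rw [hE]; exact neg_mem (mul_mem hy hao)
      · exact mul_mem (pow_mem hϖo (r - s)) hx
  · -- case r < s
    intro hsr
    have hrs : (ϖ : F) ^ s = ϖ ^ (s - r) * ϖ ^ r := by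
      rw [← pow_add]; congr 1; omega
    ext m
    constructor
    · rintro ⟨⟨t, hmt⟩, hmo⟩
      obtain ⟨u, v, ht⟩ := hquad t
      have hmt' : m = !![z * ϖ ^ s * (u + v * b) * (ϖ ^ r)⁻¹, z * ϖ ^ s * v;
          -(v * a) * (ϖ ^ r)⁻¹, u] := by
        rw [hmt, hrep t u v ht, hAM]; norm_num
      have e10 : -(v * a) * (ϖ ^ r)⁻¹ ∈ o := by
        have := hmo 1 0; rw [hmt'] at this; simpa using this
      have e11 : u ∈ o := by
        have := hmo 1 1; rw [hmt'] at this; simpa using this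
      have hy : v * (ϖ ^ r)⁻¹ ∈ o := by
        have hE : v * (ϖ ^ r)⁻¹ = -(-(v * a) * (ϖ ^ r)⁻¹ * a⁻¹) := by
          field_simp
        rw [hE]; exact neg_mem (mul_mem e10 hau)
      refine ⟨t, ⟨u, v * (ϖ ^ r)⁻¹, e11, hy, ?_⟩, hmt⟩
      have hv : (ϖ : F) ^ r * (v * (ϖ ^ r)⁻¹) = v := by field_simp
      rw [hv]; exact ht
    · rintro ⟨t, ⟨x, y, hx, hy, ht⟩, hmt⟩
      refine ⟨⟨t, hmt⟩, ?_⟩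
      intro i j
      rw [hmt, hrep t x (ϖ ^ r * y) ht, hAM]
      fin_cases i <;> fin_cases j <;> simp only [Matrix.cons_val', Matrix.cons_val_zero,
        Matrix.cons_val_one, Matrix.head_cons, Matrix.empty_val', Matrix.cons_val_fin_one,
        Matrix.head_fin_const, Fin.isValue, Matrix.of_apply, Fin.mk_zero, Fin.mk_one]
      · have hE : z * ϖ ^ s * (x + ϖ ^ r * y * b) * (ϖ ^ r)⁻¹
            = z * (ϖ ^ (s - r) * (x + ϖ ^ r * y * b)) := by
          rw [hrs]; field_simp
        rw [hE]
        exact mul_mem hz (mul_mem (pow_mem hϖo (s - r))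
          (add_mem hx (mul_mem (mul_mem (pow_mem hϖo r) hy) hbo)))
      · exact mul_mem (mul_mem hz (pow_mem hϖo s)) (mul_mem (pow_mem hϖo r) hy)
      · have hE : -(ϖ ^ r * y * a) * (ϖ ^ r)⁻¹ = -(y * a) := by
          field_simp
        rw [hE]; exact neg_mem (mul_mem hy hao)
      · exact hx
end

section
/- For every integer r ≥ 1: ∫_{ℝ} ∫_{ℝ^{r−1}} |z|^{r(r+1)/2 − 1} · (∏_{j=1}^{r−1} |a_j|^{j−1}) · exp(−z²(1 + ∑_{j=1}^{r−1} a_j²)) da₁⋯da_{r−1} dz = ∏_{j=1}^{r} Γ(j/2), where the integrals are with respect to Lebesgue measure and Γ is the Gamma function. -/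
open MeasureTheory

lemma aux_int (n : ℕ) {b : ℝ} (hb : 0 < b) :
    ∫ x : ℝ, |x| ^ n * Real.exp (-b * x ^ 2)
      = b ^ (-((n : ℝ) + 1) / 2) * Real.Gamma (((n : ℝ) + 1) / 2) := by
  rw [show (∫ x : ℝ, |x| ^ n * Real.exp (-b * x ^ 2))
      = ∫ x : ℝ, (fun t : ℝ => t ^ n * Real.exp (-b * t ^ 2)) |x| from by
        simp only []; congr 1; funext x; rw [sq_abs],
    integral_comp_abs (f := fun t : ℝ => t ^ n * Real.exp (-b * t ^ 2))]
  have h2 : ∀ x ∈ Set.Ioi (0:ℝ), x ^ n * Real.exp (-b * x ^ 2)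
      = x ^ (n : ℝ) * Real.exp (-b * x ^ (2:ℝ)) := by
    intro x hx
    rw [Real.rpow_natCast, Real.rpow_two]
  rw [setIntegral_congr_fun measurableSet_Ioi h2,
    integral_rpow_mul_exp_neg_mul_rpow two_pos (lt_of_lt_of_le neg_one_lt_zero (Nat.cast_nonneg n)) hb]
  ring

lemma gauss_aux : ∀ k : ℕ, 2 * (∑ j ∈ Finset.range k, (j + 1)) = k * (k + 1) := by
  intro k
  induction k with
  | zero => simp
  | succ k ih => rw [Finset.sum_range_succ, Nat.mul_add, ih]; ring


/-- For every integer `r ≥ 1`,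
`∫_ℝ ∫_{ℝ^{r−1}} |z|^{r(r+1)/2 − 1} · (∏_{j=1}^{r−1} |a_j|^{j−1}) ·
  exp(−z²(1 + ∑_{j=1}^{r−1} a_j²)) da dz = ∏_{j=1}^{r} Γ(j/2)`.
Here the variables `a_j` for `j = 1, …, r−1` are indexed by `Fin (r-1)` (so that the
exponent `j − 1` becomes the natural number underlying the index), the integrals are
with respect to Lebesgue measure, and `Γ` is the Gamma function. -/
theorem stmt_18 (r : ℕ) (hr : 1 ≤ r) :
    (∫ z : ℝ, ∫ a : Fin (r - 1) → ℝ,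
        |z| ^ (r * (r + 1) / 2 - 1) * (∏ j : Fin (r - 1), |a j| ^ (j : ℕ)) *
          Real.exp (-(z ^ 2) * (1 + ∑ j : Fin (r - 1), (a j) ^ 2))) =
      ∏ j ∈ Finset.Icc 1 r, Real.Gamma ((j : ℝ) / 2) := by
  obtain ⟨n, rfl⟩ : ∃ n, r = n + 1 := ⟨r - 1, (Nat.succ_pred_eq_of_pos hr).symm⟩
  suffices h : (∫ z : ℝ, ∫ a : Fin n → ℝ,
        |z| ^ ((n + 1) * (n + 1 + 1) / 2 - 1) * (∏ j : Fin n, |a j| ^ (j : ℕ)) *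
          Real.exp (-(z ^ 2) * (1 + ∑ j : Fin n, (a j) ^ 2))) =
      ∏ j ∈ Finset.Icc 1 (n + 1), Real.Gamma ((j : ℝ) / 2) by exact h
  set N : ℕ := (n + 1) * (n + 1 + 1) / 2 - 1 with hNdef
  set C : ℝ := ∏ j : Fin n, Real.Gamma (((j : ℝ) + 1) / 2) with hCdef
  set m : ℕ := ∑ j ∈ Finset.range n, (j + 1) with hmdef
  have h2m : 2 * m = n * (n + 1) := gauss_aux n
  have hm : N = m + n := by
    have e : (n + 1) * (n + 1 + 1) = n * (n + 1) + 2 * (n + 1) := by ring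
    omega
  have key : ∀ z : ℝ, z ≠ 0 →
      (∫ a : Fin n → ℝ, |z| ^ N * (∏ j : Fin n, |a j| ^ (j : ℕ)) *
          Real.exp (-(z ^ 2) * (1 + ∑ j : Fin n, (a j) ^ 2)))
        = C * (|z| ^ n * Real.exp (-(z ^ 2))) := by
    intro z hz
    have hz2 : (0 : ℝ) < z ^ 2 := by positivity
    have habs : (0 : ℝ) < |z| := abs_pos.mpr hz
    have h1 : ∀ a : Fin n → ℝ,
        |z| ^ N * (∏ j : Fin n, |a j| ^ (j : ℕ)) *
            Real.exp (-(z ^ 2) * (1 + ∑ j : Fin n, (a j) ^ 2))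
          = (|z| ^ N * Real.exp (-(z ^ 2))) *
            ∏ j : Fin n, (|a j| ^ (j : ℕ) * Real.exp (-(z ^ 2) * (a j) ^ 2)) := by
      intro a
      have e1 : Real.exp (-(z ^ 2) * (1 + ∑ j : Fin n, (a j) ^ 2))
          = Real.exp (-(z ^ 2)) * ∏ j : Fin n, Real.exp (-(z ^ 2) * (a j) ^ 2) := by
        rw [← Real.exp_sum, ← Real.exp_add]
        congr 1
        rw [← Finset.mul_sum]
        ring
      rw [e1, Finset.prod_mul_distrib]
      ring
    simp only [h1]
    rw [MeasureTheory.integral_const_mul, MeasureTheory.volume_pi,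
      MeasureTheory.integral_fintype_prod_eq_prod (ι := Fin n)
        (fun (j : Fin n) (x : ℝ) => |x| ^ (j : ℕ) * Real.exp (-(z ^ 2) * x ^ 2))]
    have h3 : ∀ j ∈ Finset.univ, (∫ x : ℝ, |x| ^ ((j : Fin n) : ℕ) * Real.exp (-(z ^ 2) * x ^ 2))
        = (z ^ 2) ^ (-(((j : Fin n) : ℝ) + 1) / 2) * Real.Gamma ((((j : Fin n) : ℝ) + 1) / 2) :=
      fun j _ => aux_int (j : ℕ) hz2
    rw [Finset.prod_congr rfl h3, Finset.prod_mul_distrib]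
    have h4 : ∏ j : Fin n, (z ^ 2 : ℝ) ^ (-((j : ℝ) + 1) / 2) = |z| ^ (-(m : ℝ)) := by
      rw [← Real.rpow_sum_of_pos hz2]
      have hsum : ∑ j : Fin n, (-((j : ℝ) + 1) / 2) = -(m : ℝ) / 2 := by
        rw [Fin.sum_univ_eq_sum_range (fun j => (-((j : ℝ) + 1) / 2)) n, hmdef]
        push_cast
        rw [neg_div, Finset.sum_div]
        simp only [neg_div]
        rw [Finset.sum_neg_distrib]
      rw [hsum, ← sq_abs z, ← Real.rpow_natCast |z| 2, ← Real.rpow_mul habs.le]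
      congr 1
      push_cast
      ring
    rw [h4]
    have h5 : |z| ^ N * |z| ^ (-(m : ℝ)) = |z| ^ n := by
      rw [← Real.rpow_natCast |z| N, ← Real.rpow_add habs, ← Real.rpow_natCast |z| n]
      congr 1
      rw [hm]
      push_cast
      ring
    rw [hCdef]
    linear_combination (Real.exp (-(z ^ 2)) *
      (∏ j : Fin n, Real.Gamma (((j : ℝ) + 1) / 2))) * h5
  have h0 : ∀ᵐ z : ℝ, z ≠ 0 := by
    refine ae_iff.mpr ?_
    simp
  have hae : (fun z : ℝ => ∫ a : Fin n → ℝ, |z| ^ N * (∏ j : Fin n, |a j| ^ (j : ℕ)) *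
          Real.exp (-(z ^ 2) * (1 + ∑ j : Fin n, (a j) ^ 2)))
      =ᶠ[ae volume] (fun z : ℝ => C * (|z| ^ n * Real.exp (-(z ^ 2)))) := by
    filter_upwards [h0] with z hz using key z hz
  rw [MeasureTheory.integral_congr_ae hae, MeasureTheory.integral_const_mul]
  have hG : (∫ z : ℝ, |z| ^ n * Real.exp (-(z ^ 2))) = Real.Gamma (((n : ℝ) + 1) / 2) := by
    have := aux_int n (one_pos)
    simpa using this
  rw [hG, Finset.prod_Icc_succ_top (Nat.le_add_left 1 n)]
  congr 1
  · rw [hCdef, Fin.prod_univ_eq_prod_range (fun j => Real.Gamma (((j : ℝ) + 1) / 2)) n,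
      show Finset.Icc 1 n = Finset.Ico 1 (n + 1) from rfl,
      Finset.prod_Ico_eq_prod_range]
    simp only [Nat.add_sub_cancel]
    refine Finset.prod_congr rfl fun j _ => ?_
    congr 1
    push_cast
    ring
  · congr 1
    push_cast
    ring
end
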